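/- arXiv:1003.5061 — 5 statements merged into one kernel-verified Lean document; each statement's English description precedes it below -/
import Mathlib

section
/- Entropic uncertainty principle (Maassen–Uffink): Let H and H̃ be complex Hilbert spaces, let U be a unitary operator on H̃, and let (π_i)_{i=1}^D be a finite family of bounded operators from H̃ to H satisfying the partition-of-identity property Σ_{i=1}^D π_i† π_i = Id_{H̃}. Then for every unit vector ψ ∈ H̃ one has Σ_{i=1}^D η(‖π_i ψ‖_H²) + Σ_{i=1}^D η(‖π_i U ψ‖_H²) ≥ −2 log max_{1≤i,j≤D} ‖π_i U π_j†‖_{L(H)}, where π† denotes the Hilbert-space adjoint and ‖·‖_{L(H)} the operator norm. -/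
open scoped ComplexConjugate
open ContinuousLinearMap

open Filter Topology

open Complex

noncomputable def co (θ : ℝ) (t : ℝ) (z : ℂ) : ℂ :=
  if t = 0 then 0 else (t : ℂ) ^ ((z - (θ:ℂ)) / ((1 + θ : ℝ) : ℂ))

lemma co_diff (θ : ℝ) (t : ℝ) (hθ : 0 < θ) : Differentiable ℂ (co θ t) := by
  unfold co
  by_cases h : t = 0
  · simp [h]
  · simp only [if_neg h]
    apply Differentiable.const_cpow
    · exact (differentiable_id.sub_const _).div_const _
    · exact Or.inl (by exact_mod_cast h)

lemma co_abs (θ : ℝ) {t : ℝ} (ht : 0 < t) (z : ℂ) (hθ : 0 < θ) :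
    ‖co θ t z‖ = t ^ ((z.re - θ) / (1 + θ)) := by
  unfold co
  rw [if_neg (ne_of_gt ht)]
  rw [Complex.norm_cpow_eq_rpow_re_of_pos ht]
  congr 1
  rw [Complex.div_ofReal_re]
  simp

lemma co_norm_le (θ : ℝ) {t : ℝ} (ht : 0 ≤ t) {z : ℂ} (hθ0 : 0 < θ) (hθ1 : θ < 1)
    (hz0 : 0 ≤ z.re) (hz1 : z.re ≤ 1) :
    ‖co θ t z‖ ≤ t ^ ((0 - θ) / (1 + θ)) + t ^ ((1 - θ) / (1 + θ)) := by
  have h1θ : (0:ℝ) < 1 + θ := by linarith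
  rcases eq_or_lt_of_le ht with h0 | h0
  · rw [← h0]
    unfold co
    rw [if_pos rfl]
    rw [Real.zero_rpow (by intro h; rw [div_eq_zero_iff] at h; rcases h with h|h <;> linarith),
        Real.zero_rpow (by intro h; rw [div_eq_zero_iff] at h; rcases h with h|h <;> linarith)]
    simp
  · rw [co_abs θ h0 z hθ0]
    have hx0 : (0 - θ) / (1 + θ) ≤ (z.re - θ) / (1 + θ) :=
      (div_le_div_iff_of_pos_right h1θ).mpr (by linarith)
    have hx1 : (z.re - θ) / (1 + θ) ≤ (1 - θ) / (1 + θ) :=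
      (div_le_div_iff_of_pos_right h1θ).mpr (by linarith)
    rcases le_total t 1 with ht1 | ht1
    · have := Real.rpow_le_rpow_of_exponent_ge h0 ht1 hx0
      have h2 : (0:ℝ) ≤ t ^ ((1 - θ) / (1 + θ)) := Real.rpow_nonneg ht _
      linarith
    · have := Real.rpow_le_rpow_of_exponent_le ht1 hx1
      have h2 : (0:ℝ) ≤ t ^ ((0 - θ) / (1 + θ)) := Real.rpow_nonneg ht _
      linarith

lemma interp_core {D : ℕ} (m : Fin D → Fin D → ℂ) (r s : Fin D → ℝ)
    (hr : ∀ i, 0 ≤ r i) (hs : ∀ j, 0 ≤ s j) {c θ : ℝ} (hc : 0 ≤ c)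
    (hθ0 : 0 < θ) (hθ1 : θ < 1)
    (h22 : ∀ μ ν : Fin D → ℂ, ‖∑ i, ∑ j, μ i * ν j * m i j‖ ≤
      Real.sqrt (∑ i, ‖μ i‖ ^ 2 * r i ^ 2) * Real.sqrt (∑ j, ‖ν j‖ ^ 2 * s j ^ 2))
    (h1 : ∀ i j, ‖m i j‖ ≤ c * (r i * s j)) :
    ‖∑ i, ∑ j, m i j‖ ≤
      c ^ θ * (∑ i, r i ^ (2/(1+θ))) ^ ((1+θ)/2) * (∑ j, s j ^ (2/(1+θ))) ^ ((1+θ)/2) := by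
  have h1θ : (0:ℝ) < 1 + θ := by linarith
  have hexp_ne : 2 / (1+θ) ≠ 0 := by positivity
  set A : ℝ := ∑ i, r i ^ (2/(1+θ)) with hA_def
  set B : ℝ := ∑ j, s j ^ (2/(1+θ)) with hB_def
  have hA_nonneg : 0 ≤ A := Finset.sum_nonneg fun i _ => Real.rpow_nonneg (hr i) _
  have hB_nonneg : 0 ≤ B := Finset.sum_nonneg fun j _ => Real.rpow_nonneg (hs j) _
  -- trivial cases A = 0 or B = 0
  have hm0r : ∀ i j, r i = 0 → m i j = 0 := by
    intro i j h
    have := h1 i j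
    rw [h] at this
    simp only [zero_mul, mul_zero] at this
    exact norm_eq_zero.mp (le_antisymm this (norm_nonneg _))
  have hm0s : ∀ i j, s j = 0 → m i j = 0 := by
    intro i j h
    have := h1 i j
    rw [h] at this
    simp only [mul_zero] at this
    exact norm_eq_zero.mp (le_antisymm this (norm_nonneg _))
  rcases eq_or_lt_of_le hA_nonneg with hA0 | hA_pos
  · have hr0 : ∀ i, r i = 0 := by
      intro i
      have h := (Finset.sum_eq_zero_iff_of_nonneg
        (fun i _ => Real.rpow_nonneg (hr i) _)).mp hA0.symm i (Finset.mem_univ i)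
      have := Real.rpow_eq_zero_iff_of_nonneg (hr i) |>.mp h
      exact this.1
    have : ∀ i, ∑ j, m i j = 0 := fun i => Finset.sum_eq_zero fun j _ => hm0r i j (hr0 i)
    rw [Finset.sum_eq_zero fun i _ => this i]
    simp only [norm_zero]
    positivity
  rcases eq_or_lt_of_le hB_nonneg with hB0 | hB_pos
  · have hs0 : ∀ j, s j = 0 := by
      intro j
      have h := (Finset.sum_eq_zero_iff_of_nonneg
        (fun j _ => Real.rpow_nonneg (hs j) _)).mp hB0.symm j (Finset.mem_univ j)
      exact (Real.rpow_eq_zero_iff_of_nonneg (hs j) |>.mp h).1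
    have : ∀ i, ∑ j, m i j = 0 := fun i => Finset.sum_eq_zero fun j _ => hm0s i j (hs0 j)
    rw [Finset.sum_eq_zero fun i _ => this i]
    simp only [norm_zero]
    positivity
    -- main case
  set F : ℂ → ℂ := fun z => ∑ i, ∑ j, co θ (r i) z * co θ (s j) z * m i j with hF_def
  have hFθ : F (θ:ℂ) = ∑ i, ∑ j, m i j := by
    apply Finset.sum_congr rfl
    intro i _
    apply Finset.sum_congr rfl
    intro j _
    by_cases hri : r i = 0
    · rw [hm0r i j hri]; simp
    by_cases hsj : s j = 0
    · rw [hm0s i j hsj]; simp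
    have hco : ∀ t : ℝ, t ≠ 0 → co θ t (θ:ℂ) = 1 := by
      intro t ht
      unfold co
      rw [if_neg ht]
      rw [show ((θ:ℂ) - (θ:ℂ)) / ((1 + θ : ℝ) : ℂ) = 0 by ring]
      exact Complex.cpow_zero _
    rw [hco _ hri, hco _ hsj, one_mul, one_mul]
  have hd : DiffContOnCl ℂ F (Complex.HadamardThreeLines.verticalStrip 0 1) := by
    apply Differentiable.diffContOnCl
    apply Differentiable.fun_sum
    intro i _
    apply Differentiable.fun_sum
    intro j _
    exact ((co_diff θ (r i) hθ0).mul (co_diff θ (s j) hθ0)).mul_const _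
  have hBdd : BddAbove ((norm ∘ F) '' (Complex.HadamardThreeLines.verticalClosedStrip 0 1)) := by
    refine ⟨∑ i, ∑ j, (r i ^ ((0-θ)/(1+θ)) + r i ^ ((1-θ)/(1+θ))) *
      ((s j ^ ((0-θ)/(1+θ)) + s j ^ ((1-θ)/(1+θ))) * ‖m i j‖), ?_⟩
    rintro x ⟨z, hz, rfl⟩
    simp only [Function.comp_apply]
    calc ‖F z‖ ≤ ∑ i, ‖∑ j, co θ (r i) z * co θ (s j) z * m i j‖ := norm_sum_le _ _
      _ ≤ ∑ i, ∑ j, ‖co θ (r i) z * co θ (s j) z * m i j‖ :=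
          Finset.sum_le_sum fun i _ => norm_sum_le _ _
      _ ≤ _ := by
          apply Finset.sum_le_sum
          intro i _
          apply Finset.sum_le_sum
          intro j _
          rw [norm_mul, norm_mul, mul_assoc]
          have hz0 : 0 ≤ z.re := hz.1
          have hz1 : z.re ≤ 1 := hz.2
          apply mul_le_mul (co_norm_le θ (hr i) hθ0 hθ1 hz0 hz1) _
            (by positivity)
            (add_nonneg (Real.rpow_nonneg (hr i) _) (Real.rpow_nonneg (hr i) _))
          exact mul_le_mul_of_nonneg_right (co_norm_le θ (hs j) hθ0 hθ1 hz0 hz1)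
            (norm_nonneg _)
  have hpow2 : ∀ {t : ℝ}, 0 < t → ∀ x : ℝ, (t ^ x) ^ 2 * t ^ 2 = t ^ (x * 2 + 2) := by
    intro t ht x
    rw [← Real.rpow_natCast (t ^ x) 2, ← Real.rpow_natCast t 2,
      ← Real.rpow_mul ht.le, ← Real.rpow_add ht]
    norm_num
  have ha : ∀ z ∈ Complex.re ⁻¹' {0}, ‖F z‖ ≤ Real.sqrt A * Real.sqrt B := by
    intro z hz
    have hzre : z.re = 0 := hz
    have key := h22 (fun i => co θ (r i) z) (fun j => co θ (s j) z)
    have hAeq : ∑ i, ‖co θ (r i) z‖ ^ 2 * r i ^ 2 = A := by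
      apply Finset.sum_congr rfl
      intro i _
      rcases eq_or_lt_of_le (hr i) with h0 | h0
      · rw [← h0]
        unfold co
        rw [if_pos rfl]
        simp [Real.zero_rpow hexp_ne]
      · rw [co_abs θ h0 z hθ0, hzre, hpow2 h0]
        congr 1
        field_simp
        ring
    have hBeq : ∑ j, ‖co θ (s j) z‖ ^ 2 * s j ^ 2 = B := by
      apply Finset.sum_congr rfl
      intro j _
      rcases eq_or_lt_of_le (hs j) with h0 | h0
      · rw [← h0]
        unfold co
        rw [if_pos rfl]
        simp [Real.zero_rpow hexp_ne]
      · rw [co_abs θ h0 z hθ0, hzre, hpow2 h0]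
        congr 1
        field_simp
        ring
    rw [hAeq, hBeq] at key
    exact key
  have hb : ∀ z ∈ Complex.re ⁻¹' {1}, ‖F z‖ ≤ c * A * B := by
    intro z hz
    have hzre : z.re = 1 := hz
    calc ‖F z‖ ≤ ∑ i, ∑ j, ‖co θ (r i) z * co θ (s j) z * m i j‖ :=
        (norm_sum_le _ _).trans (Finset.sum_le_sum fun i _ => norm_sum_le _ _)
      _ ≤ ∑ i, ∑ j, c * (r i ^ (2/(1+θ)) * s j ^ (2/(1+θ))) := by
          apply Finset.sum_le_sum
          intro i _
          apply Finset.sum_le_sum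
          intro j _
          rcases eq_or_lt_of_le (hr i) with h0 | h0
          · rw [hm0r i j h0.symm]
            simp only [mul_zero, norm_zero]
            exact mul_nonneg hc (mul_nonneg (Real.rpow_nonneg (hr i) _)
              (Real.rpow_nonneg (hs j) _))
          rcases eq_or_lt_of_le (hs j) with h0' | h0'
          · rw [hm0s i j h0'.symm]
            simp only [mul_zero, norm_zero]
            exact mul_nonneg hc (mul_nonneg (Real.rpow_nonneg (hr i) _)
              (Real.rpow_nonneg (hs j) _))
          rw [norm_mul, norm_mul, co_abs θ h0 z hθ0, co_abs θ h0' z hθ0, hzre]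
          calc r i ^ ((1-θ)/(1+θ)) * s j ^ ((1-θ)/(1+θ)) * ‖m i j‖
              ≤ r i ^ ((1-θ)/(1+θ)) * s j ^ ((1-θ)/(1+θ)) * (c * (r i * s j)) := by
                apply mul_le_mul_of_nonneg_left (h1 i j) (by positivity)
            _ = c * ((r i ^ ((1-θ)/(1+θ)) * r i) * (s j ^ ((1-θ)/(1+θ)) * s j)) := by ring
            _ = c * (r i ^ (2/(1+θ)) * s j ^ (2/(1+θ))) := by
                rw [← Real.rpow_add_one (ne_of_gt h0), ← Real.rpow_add_one (ne_of_gt h0')]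
                rw [show (1-θ)/(1+θ) + 1 = 2/(1+θ) by field_simp; ring]
      _ = c * A * B := by
          rw [mul_assoc, hA_def, hB_def, Finset.sum_mul_sum, Finset.mul_sum]
          exact Finset.sum_congr rfl fun i _ => (Finset.mul_sum _ _ _).symm
  have hzmem : (θ:ℂ) ∈ Complex.HadamardThreeLines.verticalClosedStrip 0 1 := by
    simp only [Complex.HadamardThreeLines.verticalClosedStrip, Set.mem_preimage,
      Complex.ofReal_re, Set.mem_Icc]
    exact ⟨hθ0.le, hθ1.le⟩
  have main := Complex.HadamardThreeLines.norm_le_interp_of_mem_verticalClosedStrip₀₁'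
    F hzmem hd hBdd ha hb
  rw [hFθ, Complex.ofReal_re] at main
  refine main.trans (le_of_eq ?_)
  rw [Real.sqrt_eq_rpow, Real.sqrt_eq_rpow,
    Real.mul_rpow (Real.rpow_nonneg hA_nonneg _) (Real.rpow_nonneg hB_nonneg _),
    ← Real.rpow_mul hA_nonneg, ← Real.rpow_mul hB_nonneg,
    Real.mul_rpow (mul_nonneg hc hA_nonneg) hB_nonneg,
    Real.mul_rpow hc hA_nonneg]
  calc A ^ (1/2 * (1-θ)) * B ^ (1/2 * (1-θ)) * (c ^ θ * A ^ θ * B ^ θ)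
      = c ^ θ * (A ^ (1/2 * (1-θ)) * A ^ θ) * (B ^ (1/2 * (1-θ)) * B ^ θ) := by ring
    _ = c ^ θ * A ^ (1/2 * (1-θ) + θ) * B ^ (1/2 * (1-θ) + θ) := by
        rw [← Real.rpow_add hA_pos, ← Real.rpow_add hB_pos]
    _ = c ^ θ * A ^ ((1+θ)/2) * B ^ ((1+θ)/2) := by
        rw [show 1/2 * (1-θ) + θ = (1+θ)/2 by ring]

open Filter Topology

lemma tendsto_log_sum_rpow {D : ℕ} (e : ℝ) (p : Fin D → ℝ) (hp : ∀ i, 0 ≤ p i)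
    (hsum : ∑ i, p i = 1) :
    Tendsto (fun θ : ℝ => Real.log (∑ i, p i ^ (1/(1 + e*θ))) / θ) (𝓝[>] (0:ℝ))
      (𝓝 (e * ∑ i, -(p i * Real.log (p i)))) := by
  have hval : (∑ i, p i ^ (1/(1 + e*(0:ℝ)))) = 1 := by
    simp only [mul_zero, add_zero, div_one, Real.rpow_one]
    exact hsum
  have hterm : ∀ i, HasDerivAt (fun θ : ℝ => p i ^ (1/(1 + e*θ)))
      (e * -(p i * Real.log (p i))) 0 := by
    intro i
    rcases eq_or_lt_of_le (hp i) with h0 | h0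
    · -- p i = 0
      have : (fun θ : ℝ => p i ^ (1/(1 + e*θ))) =ᶠ[𝓝 (0:ℝ)] fun _ => (0:ℝ) := by
        have hmem : {θ : ℝ | 1 + e*θ ≠ 0} ∈ 𝓝 (0:ℝ) := by
          apply IsOpen.mem_nhds
          · exact isOpen_ne.preimage (by continuity)
          · simp
        filter_upwards [hmem] with θ hθ
        rw [← h0, Real.zero_rpow (by simpa using hθ)]
      have h := (hasDerivAt_const (0:ℝ) (0:ℝ)).congr_of_eventuallyEq this
      simpa [← h0] using h
    · -- p i > 0
      have hg : HasDerivAt (fun θ : ℝ => Real.log (p i) * (1/(1 + e*θ)))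
          (Real.log (p i) * (-e)) 0 := by
        have h1 : HasDerivAt (fun θ : ℝ => 1 + e*θ) e 0 := by
          simpa using ((hasDerivAt_id (0:ℝ)).const_mul e).const_add 1
        have h2 : HasDerivAt (fun θ : ℝ => (1 + e*θ)⁻¹) (-e) 0 := by
          have := h1.fun_inv (by norm_num)
          simpa using this
        simpa [one_div] using h2.const_mul (Real.log (p i))
      have hexp := hg.exp
      have heq : (fun θ : ℝ => Real.exp (Real.log (p i) * (1/(1 + e*θ))))
          = fun θ : ℝ => p i ^ (1/(1 + e*θ)) := by
        funext θ
        rw [Real.rpow_def_of_pos h0, mul_comm]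
      rw [heq] at hexp
      convert hexp using 1
      rw [show Real.log (p i) * (1/(1 + e*(0:ℝ))) = Real.log (p i) by norm_num,
        Real.exp_log h0]
      ring
  have hsumd : HasDerivAt (fun θ : ℝ => ∑ i, p i ^ (1/(1 + e*θ)))
      (∑ i, e * -(p i * Real.log (p i))) 0 := HasDerivAt.fun_sum fun i _ => hterm i
  have hlog : HasDerivAt (fun θ : ℝ => Real.log (∑ i, p i ^ (1/(1 + e*θ))))
      (e * ∑ i, -(p i * Real.log (p i))) 0 := by
    have := hsumd.log (by rw [hval]; norm_num)
    rw [hval] at this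
    simpa [Finset.mul_sum] using this
  have hslope := hasDerivAt_iff_tendsto_slope.mp hlog
  have hmono : 𝓝[>] (0:ℝ) ≤ 𝓝[≠] (0:ℝ) :=
    nhdsWithin_mono _ fun x hx => ne_of_gt hx
  apply (hslope.mono_left hmono).congr
  intro θ
  rw [slope_def_field, hval, Real.log_one, sub_zero, sub_zero]


section hilbert
open ContinuousLinearMap
local notation "⟪" x ", " y "⟫" => @inner ℂ _ _ x y

variable {H H' : Type*}
    [NormedAddCommGroup H] [InnerProductSpace ℂ H] [CompleteSpace H]
    [NormedAddCommGroup H'] [InnerProductSpace ℂ H'] [CompleteSpace H']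







lemma sumsq {D : ℕ} (π : Fin D → (H' →L[ℂ] H))
    (hπ : ∑ i, (ContinuousLinearMap.adjoint (π i)).comp (π i)
        = ContinuousLinearMap.id ℂ H') (x : H') :
    ∑ i, ‖π i x‖ ^ 2 = ‖x‖ ^ 2 := by
  have h : ∑ i, ⟪π i x, π i x⟫ = ⟪x, x⟫ := by
    have := congrArg (fun (T : H' →L[ℂ] H') => ⟪x, T x⟫) hπ
    simpa [ContinuousLinearMap.sum_apply, inner_sum, adjoint_inner_right] using this
  have h2 := congrArg (RCLike.re (K := ℂ)) h
  simpa [inner_self_eq_norm_sq, map_sum, ← Complex.ofReal_pow] using h2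

lemma adjsum {D : ℕ} (π : Fin D → (H' →L[ℂ] H))
    (hπ : ∑ i, (ContinuousLinearMap.adjoint (π i)).comp (π i)
        = ContinuousLinearMap.id ℂ H') (w : Fin D → H) :
    ‖∑ i, ContinuousLinearMap.adjoint (π i) (w i)‖ ^ 2 ≤ ∑ i, ‖w i‖ ^ 2 := by
  set X := ∑ i, ContinuousLinearMap.adjoint (π i) (w i) with hX
  have key : ‖X‖ ^ 2 ≤ Real.sqrt (∑ i, ‖w i‖ ^ 2) * ‖X‖ := by
    have h1 : (‖X‖ : ℝ) ^ 2 = RCLike.re (K := ℂ) ⟪X, X⟫ := by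
      rw [inner_self_eq_norm_sq]
    have h2 : ⟪X, X⟫ = ∑ i, ⟪w i, π i X⟫ := by
      rw [hX, sum_inner]
      exact Finset.sum_congr rfl fun i _ => adjoint_inner_left (π i) X (w i)
    have h3 : RCLike.re (K := ℂ) ⟪X, X⟫ ≤ ∑ i, ‖w i‖ * ‖π i X‖ := by
      rw [h2, map_sum]
      refine Finset.sum_le_sum fun i _ => ?_
      calc RCLike.re (K := ℂ) ⟪w i, π i X⟫ ≤ ‖(⟪w i, π i X⟫ : ℂ)‖ := by
            exact (RCLike.re_le_norm _)
        _ ≤ ‖w i‖ * ‖π i X‖ := norm_inner_le_norm _ _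
    have h4 : (∑ i, ‖w i‖ * ‖π i X‖) ≤
        Real.sqrt (∑ i, ‖w i‖ ^ 2) * Real.sqrt (∑ i, ‖π i X‖ ^ 2) := by
      exact Real.sum_mul_le_sqrt_mul_sqrt Finset.univ _ _
    have h5 : ∑ i, ‖π i X‖ ^ 2 = ‖X‖ ^ 2 := sumsq π hπ X
    calc ‖X‖ ^ 2 = RCLike.re (K := ℂ) ⟪X, X⟫ := h1
      _ ≤ ∑ i, ‖w i‖ * ‖π i X‖ := h3
      _ ≤ Real.sqrt (∑ i, ‖w i‖ ^ 2) * Real.sqrt (∑ i, ‖π i X‖ ^ 2) := h4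
      _ = Real.sqrt (∑ i, ‖w i‖ ^ 2) * ‖X‖ := by
          rw [h5, Real.sqrt_sq (norm_nonneg X)]
  rcases eq_or_lt_of_le (norm_nonneg X) with h0 | h0
  · simp [← h0]
    positivity
  · have : ‖X‖ ≤ Real.sqrt (∑ i, ‖w i‖ ^ 2) := by
      nlinarith [key]
    calc ‖X‖ ^ 2 ≤ Real.sqrt (∑ i, ‖w i‖ ^ 2) ^ 2 := by nlinarith [norm_nonneg X]
      _ = ∑ i, ‖w i‖ ^ 2 := Real.sq_sqrt (by positivity)

lemma normU (U : H' →L[ℂ] H')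
    (hU₁ : (ContinuousLinearMap.adjoint U).comp U = ContinuousLinearMap.id ℂ H')
    (x : H') : ‖U x‖ = ‖x‖ := by
  have h : ⟪U x, U x⟫ = ⟪x, x⟫ := by
    have := congrArg (fun (T : H' →L[ℂ] H') => ⟪x, T x⟫) hU₁
    simpa [adjoint_inner_right] using this
  have h2 := congrArg (RCLike.re (K := ℂ)) h
  rw [inner_self_eq_norm_sq, inner_self_eq_norm_sq] at h2
  nlinarith [norm_nonneg (U x), norm_nonneg x]

lemma bilinear22 {D : ℕ} (π : Fin D → (H' →L[ℂ] H))
    (hπ : ∑ i, (ContinuousLinearMap.adjoint (π i)).comp (π i)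
        = ContinuousLinearMap.id ℂ H')
    (U : H' →L[ℂ] H')
    (hU₁ : (ContinuousLinearMap.adjoint U).comp U = ContinuousLinearMap.id ℂ H')
    (u v : Fin D → H) :
    ‖∑ i, ∑ j, ⟪v j, π j (U (ContinuousLinearMap.adjoint (π i) (u i)))⟫‖
      ≤ Real.sqrt (∑ i, ‖u i‖ ^ 2) * Real.sqrt (∑ j, ‖v j‖ ^ 2) := by
  set X := ∑ i, ContinuousLinearMap.adjoint (π i) (u i) with hX
  set Y := ∑ j, ContinuousLinearMap.adjoint (π j) (v j) with hY
  have heq : ∑ i, ∑ j, ⟪v j, π j (U (ContinuousLinearMap.adjoint (π i) (u i)))⟫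
      = ⟪Y, U X⟫ := by
    rw [Finset.sum_comm]
    rw [hY, sum_inner]
    refine Finset.sum_congr rfl fun j _ => ?_
    rw [adjoint_inner_left, ← inner_sum]
    congr 1
    rw [hX, map_sum, map_sum]
  rw [heq]
  calc ‖⟪Y, U X⟫‖ ≤ ‖Y‖ * ‖U X‖ := norm_inner_le_norm _ _
    _ = ‖Y‖ * ‖X‖ := by rw [normU U hU₁]
    _ ≤ Real.sqrt (∑ i, ‖u i‖ ^ 2) * Real.sqrt (∑ j, ‖v j‖ ^ 2) := by
        rw [mul_comm]
        apply mul_le_mul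
        · rw [show Real.sqrt (∑ i, ‖u i‖ ^ 2) = Real.sqrt (∑ i, ‖u i‖ ^ 2) from rfl]
          have := adjsum π hπ u
          have hX2 : ‖X‖ = Real.sqrt (‖X‖ ^ 2) := (Real.sqrt_sq (norm_nonneg X)).symm
          rw [hX2]
          exact Real.sqrt_le_sqrt this
        · have := adjsum π hπ v
          have hY2 : ‖Y‖ = Real.sqrt (‖Y‖ ^ 2) := (Real.sqrt_sq (norm_nonneg Y)).symm
          rw [hY2]
          exact Real.sqrt_le_sqrt this
        · exact norm_nonneg Y
        · exact Real.sqrt_nonneg _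

lemma key_ineq {D : ℕ} (π : Fin D → (H' →L[ℂ] H))
    (hπ : ∑ i, (ContinuousLinearMap.adjoint (π i)).comp (π i)
        = ContinuousLinearMap.id ℂ H')
    (U : H' →L[ℂ] H')
    (hU₁ : (ContinuousLinearMap.adjoint U).comp U = ContinuousLinearMap.id ℂ H')
    (ψ : H') {c θ : ℝ} (hc_pos : 0 < c)
    (hT : ∀ a b, ‖(π a).comp (U.comp (ContinuousLinearMap.adjoint (π b)))‖ ≤ c)
    (hθ0 : 0 < θ) (hθ1 : θ < 1)
    (hpsum : ∑ i, ‖π i ψ‖^2 = 1) (hqsum : ∑ j, ‖π j (U ψ)‖^2 = 1) :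
    -2*Real.log c ≤ ((1+θ) * Real.log (∑ i, (‖π i ψ‖^2 : ℝ) ^ ((1:ℝ)/(1+θ)))
        - (1-θ) * Real.log (∑ j, (‖π j (U ψ)‖^2 : ℝ) ^ ((1:ℝ)/(1-θ))))/θ := by
  have h1θ : (0:ℝ) < 1 + θ := by linarith
  have h1mθ : (0:ℝ) < 1 - θ := by linarith
  have hsq : ∀ (x a : ℝ), 0 ≤ x → (x^2) ^ a = x ^ (2*a) := by
    intro x a hx
    rw [← Real.rpow_natCast x 2, ← Real.rpow_mul hx]
    norm_num
  set u : Fin D → H := fun i => π i ψ with hu_def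
  set b : Fin D → H := fun j => π j (U ψ) with hb_def
  set v : Fin D → H := fun j => ((‖b j‖ ^ (2*θ/(1-θ)) : ℝ) : ℂ) • b j with hv_def
  set r : Fin D → ℝ := fun i => ‖u i‖ with hr_def
  set s : Fin D → ℝ := fun j => ‖v j‖ with hs_def
  set m : Fin D → Fin D → ℂ :=
    fun i j => ⟪v j, π j (U (ContinuousLinearMap.adjoint (π i) (u i)))⟫ with hm_def
  have hsv : ∀ j, s j = ‖b j‖ ^ ((1+θ)/(1-θ)) := by
    intro j
    rw [hs_def]
    simp only [hv_def]
    rw [norm_smul, Complex.norm_real, Real.norm_of_nonneg (Real.rpow_nonneg (norm_nonneg _) _)]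
    rcases eq_or_lt_of_le (norm_nonneg (b j)) with h0 | h0
    · rw [← h0, Real.zero_rpow (by positivity), Real.zero_rpow (by positivity), mul_zero]
    · calc ‖b j‖ ^ (2*θ/(1-θ)) * ‖b j‖ = ‖b j‖ ^ (2*θ/(1-θ)) * ‖b j‖ ^ (1:ℝ) := by
            rw [Real.rpow_one]
        _ = ‖b j‖ ^ (2*θ/(1-θ) + 1) := (Real.rpow_add h0 _ _).symm
        _ = ‖b j‖ ^ ((1+θ)/(1-θ)) := by
            congr 1
            field_simp
            ring
  have h1 : ∀ i j, ‖m i j‖ ≤ c * (r i * s j) := by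
    intro i j
    have step1 : ‖m i j‖ ≤ ‖v j‖ * ‖π j (U (ContinuousLinearMap.adjoint (π i) (u i)))‖ :=
      norm_inner_le_norm _ _
    have step2 : ‖π j (U (ContinuousLinearMap.adjoint (π i) (u i)))‖
        ≤ c * ‖u i‖ := by
      have : π j (U (ContinuousLinearMap.adjoint (π i) (u i)))
          = ((π j).comp (U.comp (ContinuousLinearMap.adjoint (π i)))) (u i) := rfl
      rw [this]
      calc ‖((π j).comp (U.comp (ContinuousLinearMap.adjoint (π i)))) (u i)‖
          ≤ ‖(π j).comp (U.comp (ContinuousLinearMap.adjoint (π i)))‖ * ‖u i‖ :=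
            ContinuousLinearMap.le_opNorm _ _
        _ ≤ c * ‖u i‖ := mul_le_mul_of_nonneg_right (hT j i) (norm_nonneg _)
    calc ‖m i j‖ ≤ ‖v j‖ * (c * ‖u i‖) :=
          step1.trans (mul_le_mul_of_nonneg_left step2 (norm_nonneg _))
      _ = c * (r i * s j) := by rw [hr_def, hs_def]; ring
  have h22 : ∀ μ ν : Fin D → ℂ, ‖∑ i, ∑ j, μ i * ν j * m i j‖ ≤
      Real.sqrt (∑ i, ‖μ i‖ ^ 2 * r i ^ 2) * Real.sqrt (∑ j, ‖ν j‖ ^ 2 * s j ^ 2) := by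
    intro μ ν
    have hb22 := bilinear22 π hπ U hU₁ (fun i => μ i • u i)
      (fun j => (starRingEnd ℂ) (ν j) • v j)
    have heq : ∑ i, ∑ j,
        ⟪(starRingEnd ℂ) (ν j) • v j,
          π j (U (ContinuousLinearMap.adjoint (π i) (μ i • u i)))⟫
        = ∑ i, ∑ j, μ i * ν j * m i j := by
      apply Finset.sum_congr rfl; intro i _
      apply Finset.sum_congr rfl; intro j _
      rw [map_smul, map_smul, map_smul, inner_smul_left, inner_smul_right,
        Complex.conj_conj, hm_def]
      ring
    rw [heq] at hb22
    refine hb22.trans (le_of_eq ?_)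
    congr 1
    · congr 1
      apply Finset.sum_congr rfl
      intro i _
      rw [norm_smul, mul_pow, hr_def]
    · congr 1
      apply Finset.sum_congr rfl
      intro j _
      rw [norm_smul, mul_pow, RCLike.norm_conj, hs_def]
  have interp := interp_core m r s (fun i => norm_nonneg _) (fun j => norm_nonneg _)
    hc_pos.le hθ0 hθ1 h22 h1
  -- identify the three sums
  have hψeq : ∑ i, ContinuousLinearMap.adjoint (π i) (u i) = ψ := by
    have := congrArg (fun (T : H' →L[ℂ] H') => T ψ) hπ
    simpa [ContinuousLinearMap.sum_apply] using this
  set Q : ℝ := ∑ j, (‖b j‖^2 : ℝ) ^ ((1:ℝ)/(1-θ)) with hQ_def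
  set P : ℝ := ∑ i, (‖u i‖^2 : ℝ) ^ ((1:ℝ)/(1+θ)) with hP_def
  have hbq : ∀ j, ‖b j‖ ^ (2*θ/(1-θ)) * ‖b j‖^2 = (‖b j‖^2 : ℝ) ^ ((1:ℝ)/(1-θ)) := by
    intro j
    rw [hsq _ _ (norm_nonneg _)]
    rcases eq_or_lt_of_le (norm_nonneg (b j)) with h0 | h0
    · rw [← h0]
      rw [Real.zero_rpow (by positivity), Real.zero_rpow (by positivity)]
      ring
    · rw [← Real.rpow_natCast ‖b j‖ 2, ← Real.rpow_add h0]
      congr 1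
      push_cast
      field_simp
      ring
  have hm_sum : (∑ i, ∑ j, m i j) = ((Q : ℝ) : ℂ) := by
    rw [Finset.sum_comm]
    have hinner : ∀ j, ∑ i, m i j = ((‖b j‖ ^ (2*θ/(1-θ)) * ‖b j‖^2 : ℝ) : ℂ) := by
      intro j
      have h1' : ∑ i, m i j = ⟪v j, ∑ i, π j (U (ContinuousLinearMap.adjoint (π i) (u i)))⟫ := by
        rw [inner_sum]
      rw [h1']
      have h2' : ∑ i, π j (U (ContinuousLinearMap.adjoint (π i) (u i))) = b j := by
        rw [← map_sum, ← map_sum, hψeq]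
      rw [h2', hv_def]
      rw [inner_smul_left, Complex.conj_ofReal, inner_self_eq_norm_sq_to_K]
      push_cast
      norm_num
    rw [hQ_def]
    push_cast
    apply Finset.sum_congr rfl
    intro j _
    rw [hinner j, ← hbq j]
  have hQ_nonneg : 0 ≤ Q :=
    Finset.sum_nonneg fun j _ => Real.rpow_nonneg (sq_nonneg _) _
  have hnorm_m : ‖∑ i, ∑ j, m i j‖ = Q := by
    rw [hm_sum, Complex.norm_real, Real.norm_of_nonneg hQ_nonneg]
  have hr_eq : ∑ i, r i ^ (2/(1+θ)) = P := by
    apply Finset.sum_congr rfl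
    intro i _
    rw [hsq _ _ (norm_nonneg _), hr_def, mul_one_div]
  have hs_eq : ∑ j, s j ^ (2/(1+θ)) = Q := by
    apply Finset.sum_congr rfl
    intro j _
    rw [hsv j, ← Real.rpow_mul (norm_nonneg _), hsq _ _ (norm_nonneg _)]
    congr 1
    field_simp
  rw [hnorm_m, hr_eq, hs_eq] at interp
  -- positivity of P and Q
  have hex_q : ∃ j, (‖b j‖^2 : ℝ) ≠ 0 := by
    by_contra h
    push_neg at h
    rw [Finset.sum_eq_zero (fun j _ => h j)] at hqsum
    norm_num at hqsum
  have hex_p : ∃ i, (‖u i‖^2 : ℝ) ≠ 0 := by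
    by_contra h
    push_neg at h
    rw [Finset.sum_eq_zero (fun i _ => h i)] at hpsum
    norm_num at hpsum
  obtain ⟨j₀, hj₀⟩ := hex_q
  obtain ⟨i₀, hi₀⟩ := hex_p
  have hQ_pos : 0 < Q := by
    have hterm : (0:ℝ) < (‖b j₀‖^2 : ℝ) ^ ((1:ℝ)/(1-θ)) :=
      Real.rpow_pos_of_pos (lt_of_le_of_ne (sq_nonneg _) (Ne.symm hj₀)) _
    exact lt_of_lt_of_le hterm (Finset.single_le_sum
      (f := fun j => (‖b j‖^2 : ℝ) ^ ((1:ℝ)/(1-θ)))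
      (fun j _ => Real.rpow_nonneg (sq_nonneg _) _) (Finset.mem_univ j₀))
  have hP_pos : 0 < P := by
    have hterm : (0:ℝ) < (‖u i₀‖^2 : ℝ) ^ ((1:ℝ)/(1+θ)) :=
      Real.rpow_pos_of_pos (lt_of_le_of_ne (sq_nonneg _) (Ne.symm hi₀)) _
    exact lt_of_lt_of_le hterm (Finset.single_le_sum
      (f := fun i => (‖u i‖^2 : ℝ) ^ ((1:ℝ)/(1+θ)))
      (fun i _ => Real.rpow_nonneg (sq_nonneg _) _) (Finset.mem_univ i₀))
  -- divide
  have hdiv : Q ^ ((1-θ)/2) ≤ c^θ * P^((1+θ)/2) := by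
    have interp' : Q ^ ((1-θ)/2) * Q^((1+θ)/2) ≤ (c^θ * P^((1+θ)/2)) * Q^((1+θ)/2) := by
      rw [← Real.rpow_add hQ_pos, show (1-θ)/2 + (1+θ)/2 = 1 by ring, Real.rpow_one]
      exact interp
    exact le_of_mul_le_mul_right interp' (Real.rpow_pos_of_pos hQ_pos _)
  have hlog := Real.log_le_log (Real.rpow_pos_of_pos hQ_pos _) hdiv
  rw [Real.log_rpow hQ_pos, Real.log_mul (ne_of_gt (Real.rpow_pos_of_pos hc_pos _))
    (ne_of_gt (Real.rpow_pos_of_pos hP_pos _)), Real.log_rpow hc_pos,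
    Real.log_rpow hP_pos] at hlog
  rw [le_div_iff₀ hθ0]
  rw [hP_def, hQ_def] at hlog
  simp only [hu_def, hb_def] at hlog
  linarith


end hilbert

/-- `η(x) = -x log x` (with `η(0) = 0`, since `Real.log 0 = 0`). -/
noncomputable def eta (x : ℝ) : ℝ := -(x * Real.log x)

/-- **Entropic uncertainty principle (Maassen–Uffink).**
If `(π i)_{i : Fin D}` is a family of bounded operators from `H'` to `H` with
`∑ i, (π i)† ∘ (π i) = 1` and `U` is a unitary operator on `H'`, then for every unit
vector `ψ` one has
`∑ i, η(‖π i ψ‖²) + ∑ i, η(‖π i (U ψ)‖²) ≥ -2 log (max_{i,j} ‖π i ∘ U ∘ (π j)†‖)`. -/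
theorem maassen_uffink_entropic_uncertainty
    {H H' : Type*}
    [NormedAddCommGroup H] [InnerProductSpace ℂ H] [CompleteSpace H]
    [NormedAddCommGroup H'] [InnerProductSpace ℂ H'] [CompleteSpace H']
    {D : ℕ} (π : Fin D → (H' →L[ℂ] H))
    (hπ : ∑ i, (ContinuousLinearMap.adjoint (π i)).comp (π i)
        = ContinuousLinearMap.id ℂ H')
    (U : H' →L[ℂ] H')
    (hU₁ : (ContinuousLinearMap.adjoint U).comp U = ContinuousLinearMap.id ℂ H')
    (hU₂ : U.comp (ContinuousLinearMap.adjoint U) = ContinuousLinearMap.id ℂ H')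
    (ψ : H') (hψ : ‖ψ‖ = 1) :
    (∑ i, eta (‖π i ψ‖ ^ 2)) + (∑ i, eta (‖π i (U ψ)‖ ^ 2))
      ≥ -2 * Real.log (⨆ i : Fin D, ⨆ j : Fin D,
          ‖(π i).comp (U.comp (ContinuousLinearMap.adjoint (π j)))‖) := by
  set c : ℝ := ⨆ i : Fin D, ⨆ j : Fin D,
      ‖(π i).comp (U.comp (ContinuousLinearMap.adjoint (π j)))‖ with hc_def
  have hc0 : 0 ≤ c :=
    Real.iSup_nonneg fun i => Real.iSup_nonneg fun j => norm_nonneg _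
  have hpsum : ∑ i, ‖π i ψ‖ ^ 2 = 1 := by
    rw [sumsq π hπ ψ, hψ]; norm_num
  have hqsum : ∑ j, ‖π j (U ψ)‖ ^ 2 = 1 := by
    rw [sumsq π hπ (U ψ), normU U hU₁ ψ, hψ]; norm_num
  have hetaP : 0 ≤ ∑ i, eta (‖π i ψ‖ ^ 2) := by
    apply Finset.sum_nonneg
    intro i _
    have hle : ‖π i ψ‖ ^ 2 ≤ 1 := by
      rw [← hpsum]
      exact Finset.single_le_sum (fun i _ => sq_nonneg ‖π i ψ‖) (Finset.mem_univ i)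
    have := Real.log_nonpos (sq_nonneg ‖π i ψ‖) hle
    have := mul_nonpos_of_nonneg_of_nonpos (sq_nonneg ‖π i ψ‖) this
    simp only [_root_.eta]
    linarith
  have hetaQ : 0 ≤ ∑ j, eta (‖π j (U ψ)‖ ^ 2) := by
    apply Finset.sum_nonneg
    intro j _
    have hle : ‖π j (U ψ)‖ ^ 2 ≤ 1 := by
      rw [← hqsum]
      exact Finset.single_le_sum (fun j _ => sq_nonneg ‖π j (U ψ)‖) (Finset.mem_univ j)
    have := Real.log_nonpos (sq_nonneg ‖π j (U ψ)‖) hle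
    have := mul_nonpos_of_nonneg_of_nonpos (sq_nonneg ‖π j (U ψ)‖) this
    simp only [_root_.eta]
    linarith
  rcases le_or_gt 0 (Real.log c) with hlogc | hlogc
  · have : -2 * Real.log c ≤ 0 := by linarith
    linarith
  · -- nontrivial case: 0 < c
    have hc_pos : 0 < c := by
      rcases eq_or_lt_of_le hc0 with h0 | h0
      · exfalso
        rw [← h0, Real.log_zero] at hlogc
        exact lt_irrefl _ hlogc
      · exact h0
    have hT : ∀ a b, ‖(π a).comp (U.comp (ContinuousLinearMap.adjoint (π b)))‖ ≤ c := by
      intro a b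
      calc ‖(π a).comp (U.comp (ContinuousLinearMap.adjoint (π b)))‖
          ≤ ⨆ j : Fin D, ‖(π a).comp (U.comp (ContinuousLinearMap.adjoint (π j)))‖ :=
            le_ciSup (f := fun j : Fin D =>
              ‖(π a).comp (U.comp (ContinuousLinearMap.adjoint (π j)))‖)
              (Set.Finite.bddAbove (Set.finite_range _)) b
        _ ≤ c :=
            le_ciSup (f := fun i => ⨆ j : Fin D,
              ‖(π i).comp (U.comp (ContinuousLinearMap.adjoint (π j)))‖)
              (Set.Finite.bddAbove (Set.finite_range _)) a
    have t1 := tendsto_log_sum_rpow 1 (fun i => ‖π i ψ‖ ^ 2) (fun i => sq_nonneg _) hpsum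
    have t2 := tendsto_log_sum_rpow (-1) (fun j => ‖π j (U ψ)‖ ^ 2)
      (fun j => sq_nonneg _) hqsum
    have t1' : Filter.Tendsto
        (fun θ : ℝ => Real.log (∑ i, (‖π i ψ‖ ^ 2 : ℝ) ^ ((1:ℝ)/(1+θ))) / θ)
        (𝓝[>] (0:ℝ)) (𝓝 (1 * ∑ i, -(‖π i ψ‖ ^ 2 * Real.log (‖π i ψ‖ ^ 2)))) := by
      apply t1.congr
      intro θ
      norm_num
    have t2' : Filter.Tendsto
        (fun θ : ℝ => Real.log (∑ j, (‖π j (U ψ)‖ ^ 2 : ℝ) ^ ((1:ℝ)/(1-θ))) / θ)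
        (𝓝[>] (0:ℝ)) (𝓝 ((-1) * ∑ j, -(‖π j (U ψ)‖ ^ 2 * Real.log (‖π j (U ψ)‖ ^ 2)))) := by
      apply t2.congr
      intro θ
      rw [show 1 + (-1)*θ = 1 - θ by ring]
    have hlim1 : Filter.Tendsto (fun θ : ℝ => 1 + θ) (𝓝[>] (0:ℝ)) (𝓝 (1:ℝ)) := by
      have h : Continuous (fun θ : ℝ => 1 + θ) := continuous_const.add continuous_id
      simpa using (h.tendsto (0:ℝ)).mono_left nhdsWithin_le_nhds
    have hlim2 : Filter.Tendsto (fun θ : ℝ => 1 - θ) (𝓝[>] (0:ℝ)) (𝓝 (1:ℝ)) := by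
      have h : Continuous (fun θ : ℝ => 1 - θ) := continuous_const.sub continuous_id
      simpa using (h.tendsto (0:ℝ)).mono_left nhdsWithin_le_nhds
    have comb := (hlim1.mul t1').sub (hlim2.mul t2')
    have hE : Filter.Tendsto
        (fun θ : ℝ => ((1+θ) * Real.log (∑ i, (‖π i ψ‖ ^ 2 : ℝ) ^ ((1:ℝ)/(1+θ)))
          - (1-θ) * Real.log (∑ j, (‖π j (U ψ)‖ ^ 2 : ℝ) ^ ((1:ℝ)/(1-θ)))) / θ)
        (𝓝[>] (0:ℝ))
        (𝓝 ((∑ i, eta (‖π i ψ‖ ^ 2)) + ∑ i, eta (‖π i (U ψ)‖ ^ 2))) := by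
      have hval : (1:ℝ) * (1 * ∑ i, -(‖π i ψ‖ ^ 2 * Real.log (‖π i ψ‖ ^ 2)))
          - 1 * ((-1) * ∑ j, -(‖π j (U ψ)‖ ^ 2 * Real.log (‖π j (U ψ)‖ ^ 2)))
          = (∑ i, eta (‖π i ψ‖ ^ 2)) + ∑ i, eta (‖π i (U ψ)‖ ^ 2) := by
        simp only [_root_.eta]
        ring
      rw [← hval]
      apply comb.congr
      intro θ
      rw [sub_div, mul_div_assoc, mul_div_assoc]
    have hev : ∀ᶠ θ : ℝ in 𝓝[>] (0:ℝ), -2 * Real.log c ≤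
        ((1+θ) * Real.log (∑ i, (‖π i ψ‖ ^ 2 : ℝ) ^ ((1:ℝ)/(1+θ)))
          - (1-θ) * Real.log (∑ j, (‖π j (U ψ)‖ ^ 2 : ℝ) ^ ((1:ℝ)/(1-θ)))) / θ := by
      filter_upwards [Ioo_mem_nhdsGT_of_mem
        (Set.mem_Ico.mpr ⟨le_refl (0:ℝ), zero_lt_one⟩)] with θ hθ
      exact key_ineq π hπ U hU₁ ψ hc_pos hT hθ.1 hθ.2 hpsum hqsum
    exact ge_of_tendsto hE hev
end

section
/- Convolution-kernel identity for the adapted quantization (Appendix A of the paper): Let ℏ > 0, let B ∈ GL(2d,R), and set G_B := 2^{d/2} |det B|^{1/2} G∘B. Then for every bounded continuous function a : R^{2d} → C and every ρ ∈ R^{2d}, (a ⋆ (G_B ♯ G_B))(ρ) = ∫_{R^{2d}} a(ρ + B^{−1}ρ₀) K(ρ₀) dρ₀, where K(ρ₀) := 2^d ∫_{R^{2d}} e^{−2iπ⟨ρ₁,ρ₀⟩} G(ρ₁) G(πℏ · B J Bᵀ ρ₁ − ρ₀) dρ₁, and ⋆ denotes convolution on R^{2d}: (a ⋆ F)(ρ)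 = ∫ a(ρ₀) F(ρ − ρ₀) dρ₀. -/
open MeasureTheory Matrix

noncomputable section

/-- The standard symplectic matrix `J = (0, -I; I, 0)` on `ℝ^{2d}`. -/
def Jmat (d : ℕ) : Matrix (Fin d ⊕ Fin d) (Fin d ⊕ Fin d) ℝ :=
  Matrix.fromBlocks 0 (-1) 1 0

/-- Euclidean inner product on `ℝ^{2d}`. -/
def ip {d : ℕ} (v w : (Fin d ⊕ Fin d) → ℝ) : ℝ := ∑ i, v i * w i

/-- The Gaussian `G(w) = exp(-π ‖w‖²)` on `ℝ^{2d}`. -/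
def Gfun {d : ℕ} (w : (Fin d ⊕ Fin d) → ℝ) : ℝ := Real.exp (-(Real.pi * ∑ i, (w i) ^ 2))

/-- The Moyal product
`(F₁ ♯ F₂)(w) = (πℏ)^{-2d} ∬ F₁(w+w₁) F₂(w+w₂) e^{-(2i/ℏ)⟨w₁, Jw₂⟩} dw₁ dw₂`. -/
def moyal (d : ℕ) (ℏ : ℝ) (F₁ F₂ : ((Fin d ⊕ Fin d) → ℝ) → ℂ)
    (w : (Fin d ⊕ Fin d) → ℝ) : ℂ :=
  (((Real.pi * ℏ) ^ (2 * d))⁻¹ : ℝ) *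
    ∫ w₁ : (Fin d ⊕ Fin d) → ℝ, ∫ w₂ : (Fin d ⊕ Fin d) → ℝ,
      F₁ (w + w₁) * F₂ (w + w₂) *
        Complex.exp (-(2 * Complex.I / ℏ) * (ip w₁ ((Jmat d).mulVec w₂) : ℝ))

/-- The rescaled Gaussian `G_B := 2^{d/2} |det B|^{1/2} G ∘ B`. -/
def GB {d : ℕ} (B : Matrix (Fin d ⊕ Fin d) (Fin d ⊕ Fin d) ℝ)
    (w : (Fin d ⊕ Fin d) → ℝ) : ℝ :=
  (2 : ℝ) ^ ((d : ℝ) / 2) * Real.sqrt |B.det| * Gfun (B.mulVec w)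

/-- The kernel `K(ρ₀) = 2^d ∫ e^{-2iπ⟨ρ₁,ρ₀⟩} G(ρ₁) G(πℏ BJBᵀ ρ₁ − ρ₀) dρ₁`. -/
def Kker (d : ℕ) (ℏ : ℝ) (B : Matrix (Fin d ⊕ Fin d) (Fin d ⊕ Fin d) ℝ)
    (ρ₀ : (Fin d ⊕ Fin d) → ℝ) : ℂ :=
  (2 : ℝ) ^ d *
    ∫ ρ₁ : (Fin d ⊕ Fin d) → ℝ,
      Complex.exp (-(2 * Real.pi * Complex.I) * (ip ρ₁ ρ₀ : ℝ)) *
        (Gfun ρ₁ : ℝ) *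
        ((Gfun ((Real.pi * ℏ) • ((B * Jmat d * Bᵀ).mulVec ρ₁) - ρ₀) : ℝ) : ℂ)

/-! ### Auxiliary lemmas -/

theorem ip_eq_dot {d : ℕ} (v w : (Fin d ⊕ Fin d) → ℝ) : ip v w = v ⬝ᵥ w := rfl

/-- Change of variables by an invertible matrix on `ℝ^{2d}`. -/
theorem integral_comp_mulVec {d : ℕ} (M : Matrix (Fin d ⊕ Fin d) (Fin d ⊕ Fin d) ℝ)
    (hM : M.det ≠ 0) (f : ((Fin d ⊕ Fin d) → ℝ) → ℂ) :
    ∫ x, f (M.mulVec x) = |M.det|⁻¹ • ∫ x, f x := by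
  have hI : Invertible M := M.invertibleOfIsUnitDet (isUnit_iff_ne_zero.2 hM)
  let e : ((Fin d ⊕ Fin d) → ℝ) ≃ᵐ ((Fin d ⊕ Fin d) → ℝ) :=
    (M.toLinearEquiv' hI).toContinuousLinearEquiv.toHomeomorph.toMeasurableEquiv
  have he : ⇑e = fun x => M.mulVec x := by
    ext x
    simp [e, Matrix.toLinearEquiv', Matrix.toLin'_apply]
  have hmap : Measure.map e volume =
      (ENNReal.ofReal |M.det|⁻¹) • (volume : Measure ((Fin d ⊕ Fin d) → ℝ)) := by
    have h2 : ⇑e = ⇑(Matrix.toLin' M) := by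
      rw [he]; ext x; simp [Matrix.toLin'_apply]
    rw [h2, Real.map_matrix_volume_pi_eq_smul_volume_pi hM, abs_inv]
  calc ∫ x, f (M.mulVec x) = ∫ x, f (e x) := by rw [he]
    _ = ∫ y, f y ∂(Measure.map e volume) := (MeasureTheory.integral_map_equiv e f).symm
    _ = |M.det|⁻¹ • ∫ x, f x := by
        rw [hmap, integral_smul_measure, ENNReal.toReal_ofReal (by positivity)]

/-- Fourier-type integral of the standard Gaussian on `ℝ^{2d}`. -/
theorem gauss_ft {d : ℕ} (c : ℂ) (v : (Fin d ⊕ Fin d) → ℝ) :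
    ∫ u : (Fin d ⊕ Fin d) → ℝ, ((Gfun u : ℝ) : ℂ) * Complex.exp (c * ((ip v u : ℝ) : ℂ))
      = Complex.exp ((∑ i, (v i : ℂ) ^ 2) * c ^ 2 / (4 * Real.pi)) := by
  have h1 : ∀ u : (Fin d ⊕ Fin d) → ℝ,
      ((Gfun u : ℝ) : ℂ) * Complex.exp (c * ((ip v u : ℝ) : ℂ))
      = Complex.exp (-∑ i, (Real.pi : ℂ) * (u i : ℂ) ^ 2 + ∑ i, (c * v i) * (u i : ℂ)) := by
    intro u
    rw [Gfun, ip, Complex.ofReal_exp, ← Complex.exp_add]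
    congr 1
    push_cast
    rw [Finset.mul_sum, Finset.mul_sum]
    congr 1
    exact Finset.sum_congr rfl fun i _ => by ring
  simp_rw [h1]
  rw [GaussianFourier.integral_cexp_neg_sum_mul_add (fun _ => by simp [Real.pi_pos])
    (fun i => c * (v i : ℂ))]
  have hpi : ((Real.pi : ℂ)) ≠ 0 := by
    simp [Complex.ofReal_ne_zero, Real.pi_ne_zero]
  simp only [div_self hpi, Complex.one_cpow, one_mul, ← Complex.exp_sum]
  congr 1
  rw [Finset.sum_mul, Finset.sum_div]
  exact Finset.sum_congr rfl fun i _ => by ring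

theorem Jmat_transpose_mul (d : ℕ) : (Jmat d)ᵀ * Jmat d = 1 := by
  simp [Jmat, Matrix.fromBlocks_transpose, Matrix.fromBlocks_multiply,
    ← Matrix.fromBlocks_one]

theorem abs_det_Jmat (d : ℕ) : |(Jmat d).det| = 1 := by
  have h := congrArg Matrix.det (Jmat_transpose_mul d)
  rw [Matrix.det_mul, Matrix.det_transpose, Matrix.det_one] at h
  rcases mul_self_eq_one_iff.1 h with h' | h' <;> rw [h'] <;> norm_num

/-- The inner (w₂) integral of the Moyal product of two `G_B`'s, in closed form. -/
theorem inner_int {d : ℕ} {ℏ : ℝ} (hℏ : 0 < ℏ)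
    (B : Matrix (Fin d ⊕ Fin d) (Fin d ⊕ Fin d) ℝ) (hB : IsUnit B.det)
    (w w₁ : (Fin d ⊕ Fin d) → ℝ) :
    ∫ w₂ : (Fin d ⊕ Fin d) → ℝ,
      ((GB B (w + w₂) : ℝ) : ℂ) *
        Complex.exp (-(2 * Complex.I / ℏ) * ((ip w₁ ((Jmat d).mulVec w₂) : ℝ) : ℂ))
      = (((2 : ℝ) ^ ((d : ℝ) / 2) * Real.sqrt |B.det| * |B.det|⁻¹ : ℝ) : ℂ) *
        (Complex.exp ((2 * Complex.I / ℏ) *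
            ((ip ((Jmat d * B⁻¹)ᵀ.mulVec w₁) (B.mulVec w) : ℝ) : ℂ)) *
         Complex.exp ((∑ i, ((((Jmat d * B⁻¹)ᵀ.mulVec w₁) i : ℝ) : ℂ) ^ 2) *
            (-(2 * Complex.I / ℏ)) ^ 2 / (4 * Real.pi))) := by
  have hdet : B.det ≠ 0 := by
    intro h; rw [h] at hB; exact (by simpa using hB : IsUnit (0 : ℝ)).ne_zero rfl
  set c : ℂ := -(2 * Complex.I / ℏ) with hc
  set v : (Fin d ⊕ Fin d) → ℝ := (Jmat d * B⁻¹)ᵀ.mulVec w₁ with hvdef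
  set cG : ℝ := (2 : ℝ) ^ ((d : ℝ) / 2) * Real.sqrt |B.det| with hcG
  set f : ((Fin d ⊕ Fin d) → ℝ) → ℂ := fun u =>
    (cG : ℂ) * (((Gfun (B.mulVec w + u) : ℝ) : ℂ) *
      Complex.exp (c * ((ip v u : ℝ) : ℂ))) with hf
  have h1 : ∀ w₂ : (Fin d ⊕ Fin d) → ℝ,
      ((GB B (w + w₂) : ℝ) : ℂ) *
        Complex.exp (-(2 * Complex.I / ℏ) * ((ip w₁ ((Jmat d).mulVec w₂) : ℝ) : ℂ))
      = f (B.mulVec w₂) := by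
    intro w₂
    have hip : ip v (B.mulVec w₂) = ip w₁ ((Jmat d).mulVec w₂) := by
      rw [ip_eq_dot, ip_eq_dot, hvdef, Matrix.mulVec_transpose, ← Matrix.dotProduct_mulVec,
        Matrix.mulVec_mulVec, Matrix.mul_assoc, Matrix.nonsing_inv_mul B hB, Matrix.mul_one]
    rw [hf]
    simp only [GB, Matrix.mulVec_add, hcG]
    rw [hip]
    push_cast
    ring
  have h2 : ∫ u, f u = (cG : ℂ) *
      (Complex.exp (-(c * ((ip v (B.mulVec w) : ℝ) : ℂ))) *
        Complex.exp ((∑ i, (v i : ℂ) ^ 2) * c ^ 2 / (4 * Real.pi))) := by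
    set g : ((Fin d ⊕ Fin d) → ℝ) → ℂ := fun y =>
      ((Gfun y : ℝ) : ℂ) * Complex.exp (c * ((ip v y : ℝ) : ℂ)) with hg
    have h3 : ∀ u, ((Gfun (B.mulVec w + u) : ℝ) : ℂ) * Complex.exp (c * ((ip v u : ℝ) : ℂ))
        = Complex.exp (-(c * ((ip v (B.mulVec w) : ℝ) : ℂ))) * g (B.mulVec w + u) := by
      intro u
      rw [hg]
      have hadd : ip v (B.mulVec w + u) = ip v (B.mulVec w) + ip v u := by
        rw [ip_eq_dot, ip_eq_dot, ip_eq_dot, dotProduct_add]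
      simp only [hadd]
      push_cast
      rw [mul_add, Complex.exp_add, Complex.exp_neg]
      have h0 := Complex.exp_ne_zero (c * ((ip v (B.mulVec w) : ℝ) : ℂ))
      field_simp
    calc ∫ u, f u = (cG : ℂ) * ∫ u, ((Gfun (B.mulVec w + u) : ℝ) : ℂ) *
          Complex.exp (c * ((ip v u : ℝ) : ℂ)) := by
          rw [hf]; exact MeasureTheory.integral_const_mul _ _
      _ = (cG : ℂ) * ∫ u, Complex.exp (-(c * ((ip v (B.mulVec w) : ℝ) : ℂ))) *
            g (B.mulVec w + u) := by congr 1; exact integral_congr_ae (Filter.Eventually.of_forall h3)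
      _ = (cG : ℂ) * (Complex.exp (-(c * ((ip v (B.mulVec w) : ℝ) : ℂ))) *
            ∫ u, g (B.mulVec w + u)) := by rw [MeasureTheory.integral_const_mul]
      _ = (cG : ℂ) * (Complex.exp (-(c * ((ip v (B.mulVec w) : ℝ) : ℂ))) *
            ∫ y, g y) := by rw [MeasureTheory.integral_add_left_eq_self g (B.mulVec w)]
      _ = _ := by rw [hg, gauss_ft c v]
  calc ∫ w₂ : (Fin d ⊕ Fin d) → ℝ,
        ((GB B (w + w₂) : ℝ) : ℂ) *
          Complex.exp (-(2 * Complex.I / ℏ) * ((ip w₁ ((Jmat d).mulVec w₂) : ℝ) : ℂ))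
      = ∫ w₂, f (B.mulVec w₂) := by
        exact integral_congr_ae (Filter.Eventually.of_forall h1)
    _ = |B.det|⁻¹ • ∫ u, f u := integral_comp_mulVec B hdet f
    _ = _ := by
        rw [h2, hc]
        push_cast
        rw [Complex.real_smul]
        push_cast
        ring_nf

theorem Kker_eq {d : ℕ} {ℏ : ℝ} (hℏ : 0 < ℏ)
    (B : Matrix (Fin d ⊕ Fin d) (Fin d ⊕ Fin d) ℝ) (hB : IsUnit B.det)
    (ρ₀ : (Fin d ⊕ Fin d) → ℝ) :
    Kker d ℏ B ρ₀ = (|B.det|⁻¹ : ℝ) •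
      moyal d ℏ (fun w => (GB B w : ℂ)) (fun w => (GB B w : ℂ)) (-(B⁻¹.mulVec ρ₀)) := by
  have hdet : B.det ≠ 0 := isUnit_iff_ne_zero.mp hB
  have hπℏ : 0 < Real.pi * ℏ := mul_pos Real.pi_pos hℏ
  have hℏ0 : (ℏ : ℂ) ≠ 0 := Complex.ofReal_ne_zero.2 (ne_of_gt hℏ)
  set w : (Fin d ⊕ Fin d) → ℝ := -(B⁻¹.mulVec ρ₀) with hw
  set A : Matrix (Fin d ⊕ Fin d) (Fin d ⊕ Fin d) ℝ := (Real.pi * ℏ) • (Jmat d * Bᵀ) with hA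
  have hJdet : (Jmat d).det ≠ 0 := by
    intro h; have := abs_det_Jmat d; rw [h] at this; norm_num at this
  have hcard : Fintype.card (Fin d ⊕ Fin d) = 2 * d := by
    simp [Fintype.card_sum, two_mul]
  have hAdet : A.det = (Real.pi * ℏ) ^ (2 * d) * ((Jmat d).det * B.det) := by
    rw [hA, Matrix.det_smul, hcard, Matrix.det_mul, Matrix.det_transpose]
  have hAne : A.det ≠ 0 := by
    rw [hAdet]
    exact mul_ne_zero (pow_ne_zero _ (ne_of_gt hπℏ)) (mul_ne_zero hJdet hdet)
  have habsA : |A.det| = (Real.pi * ℏ) ^ (2 * d) * |B.det| := by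
    rw [hAdet, abs_mul, abs_mul, abs_det_Jmat, abs_of_pos (pow_pos hπℏ _), one_mul]
  set cG : ℝ := (2 : ℝ) ^ ((d : ℝ) / 2) * Real.sqrt |B.det| with hcG
  set F : ((Fin d ⊕ Fin d) → ℝ) → ℂ := fun w₁ =>
    ((GB B (w + w₁) : ℝ) : ℂ) *
      ((((2 : ℝ) ^ ((d : ℝ) / 2) * Real.sqrt |B.det| * |B.det|⁻¹ : ℝ) : ℂ) *
        (Complex.exp ((2 * Complex.I / ℏ) *
            ((ip ((Jmat d * B⁻¹)ᵀ.mulVec w₁) (B.mulVec w) : ℝ) : ℂ)) *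
         Complex.exp ((∑ i, ((((Jmat d * B⁻¹)ᵀ.mulVec w₁) i : ℝ) : ℂ) ^ 2) *
            (-(2 * Complex.I / ℏ)) ^ 2 / (4 * Real.pi)))) with hF
  set Z : ℂ := ∫ ρ₁ : (Fin d ⊕ Fin d) → ℝ,
      Complex.exp (-(2 * Real.pi * Complex.I) * (ip ρ₁ ρ₀ : ℝ)) *
        (Gfun ρ₁ : ℝ) *
        ((Gfun ((Real.pi * ℏ) • ((B * Jmat d * Bᵀ).mulVec ρ₁) - ρ₀) : ℝ) : ℂ) with hZ
  have hmoyal : moyal d ℏ (fun w => (GB B w : ℂ)) (fun w => (GB B w : ℂ)) w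
      = ((((Real.pi * ℏ) ^ (2 * d))⁻¹ : ℝ) : ℂ) * ∫ w₁, F w₁ := by
    simp only [moyal]
    congr 1
    refine integral_congr_ae (Filter.Eventually.of_forall fun w₁ => ?_)
    calc ∫ w₂ : (Fin d ⊕ Fin d) → ℝ, ((GB B (w + w₁) : ℝ) : ℂ) * ((GB B (w + w₂) : ℝ) : ℂ) *
            Complex.exp (-(2 * Complex.I / ℏ) * ((ip w₁ ((Jmat d).mulVec w₂) : ℝ) : ℂ))
        = ((GB B (w + w₁) : ℝ) : ℂ) * ∫ w₂ : (Fin d ⊕ Fin d) → ℝ, ((GB B (w + w₂) : ℝ) : ℂ) *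
            Complex.exp (-(2 * Complex.I / ℏ) * ((ip w₁ ((Jmat d).mulVec w₂) : ℝ) : ℂ)) := by
          simp_rw [mul_assoc]
          exact MeasureTheory.integral_const_mul _ _
      _ = F w₁ := by rw [inner_int hℏ B hB w w₁, hF]
  have hJJ : (Jmat d * B⁻¹)ᵀ * (Jmat d * Bᵀ) = 1 := by
    rw [Matrix.transpose_mul, Matrix.mul_assoc, ← Matrix.mul_assoc (Jmat d)ᵀ,
      Jmat_transpose_mul, Matrix.one_mul, ← Matrix.transpose_mul,
      Matrix.mul_nonsing_inv B hB, Matrix.transpose_one]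
  have hBw : B.mulVec w = -ρ₀ := by
    rw [hw, Matrix.mulVec_neg, Matrix.mulVec_mulVec, Matrix.mul_nonsing_inv B hB,
      Matrix.one_mulVec]
  have h4 : ∀ ρ₁ : (Fin d ⊕ Fin d) → ℝ, F (A.mulVec ρ₁)
      = ((cG * (cG * |B.det|⁻¹) : ℝ) : ℂ) *
        (Complex.exp (-(2 * Real.pi * Complex.I) * (ip ρ₁ ρ₀ : ℝ)) *
          (Gfun ρ₁ : ℝ) *
          ((Gfun ((Real.pi * ℏ) • ((B * Jmat d * Bᵀ).mulVec ρ₁) - ρ₀) : ℝ) : ℂ)) := by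
    intro ρ₁
    have hv : (Jmat d * B⁻¹)ᵀ.mulVec (A.mulVec ρ₁) = (Real.pi * ℏ) • ρ₁ := by
      rw [hA, Matrix.smul_mulVec, Matrix.mulVec_smul, Matrix.mulVec_mulVec, hJJ,
        Matrix.one_mulVec]
    have hGarg : B.mulVec (w + A.mulVec ρ₁)
        = (Real.pi * ℏ) • ((B * Jmat d * Bᵀ).mulVec ρ₁) - ρ₀ := by
      rw [Matrix.mulVec_add, hBw, hA, Matrix.smul_mulVec, Matrix.mulVec_smul,
        Matrix.mulVec_mulVec, ← Matrix.mul_assoc, neg_add_eq_sub]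
    have hipval : ip ((Real.pi * ℏ) • ρ₁) (-ρ₀) = -((Real.pi * ℏ) * ip ρ₁ ρ₀) := by
      rw [ip_eq_dot, ip_eq_dot, dotProduct_neg, smul_dotProduct, smul_eq_mul]
    have hphase : (2 * Complex.I / ℏ) * ((ip ((Real.pi * ℏ) • ρ₁) (-ρ₀) : ℝ) : ℂ)
        = -(2 * Real.pi * Complex.I) * ((ip ρ₁ ρ₀ : ℝ) : ℂ) := by
      rw [hipval]
      push_cast
      field_simp
    have hc2 : (-(2 * Complex.I / ℏ)) ^ 2 = -4 / (ℏ : ℂ) ^ 2 := by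
      rw [neg_sq, div_pow, mul_pow, Complex.I_sq]
      ring
    have hsum : (∑ i, ((((Real.pi * ℏ) • ρ₁) i : ℝ) : ℂ) ^ 2)
        = ((Real.pi * ℏ : ℝ) : ℂ) ^ 2 * ∑ i, ((ρ₁ i : ℝ) : ℂ) ^ 2 := by
      rw [Finset.mul_sum]
      refine Finset.sum_congr rfl fun i _ => ?_
      simp only [Pi.smul_apply, smul_eq_mul]
      push_cast
      ring
    have hπ0 : ((Real.pi : ℝ) : ℂ) ≠ 0 := Complex.ofReal_ne_zero.2 Real.pi_ne_zero
    have hgauss : Complex.exp ((∑ i, ((((Real.pi * ℏ) • ρ₁) i : ℝ) : ℂ) ^ 2) *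
          (-(2 * Complex.I / ℏ)) ^ 2 / (4 * Real.pi)) = ((Gfun ρ₁ : ℝ) : ℂ) := by
      rw [hsum, hc2, Gfun, Complex.ofReal_exp]
      congr 1
      push_cast
      field_simp
    rw [hF]
    simp only [GB]
    rw [hv, hBw, hGarg, hphase, hgauss, hcG]
    simp only [Complex.ofReal_mul, Complex.ofReal_inv]
    push_cast
    ring
  have h3 : ∫ w₁, F w₁ = |A.det| • ∫ ρ₁, F (A.mulVec ρ₁) := by
    rw [integral_comp_mulVec A hAne F, smul_smul, mul_inv_cancel₀ (abs_ne_zero.2 hAne), one_smul]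
  have h5 : ∫ ρ₁, F (A.mulVec ρ₁) = ((cG * (cG * |B.det|⁻¹) : ℝ) : ℂ) * Z := by
    rw [integral_congr_ae (Filter.Eventually.of_forall h4), MeasureTheory.integral_const_mul, hZ]
  have hcGsq : cG * cG = 2 ^ d * |B.det| := by
    have h1 : Real.sqrt |B.det| * Real.sqrt |B.det| = |B.det| :=
      Real.mul_self_sqrt (abs_nonneg _)
    have h2 : (2 : ℝ) ^ ((d : ℝ) / 2) * (2 : ℝ) ^ ((d : ℝ) / 2) = 2 ^ (d : ℕ) := by
      rw [← Real.rpow_add two_pos]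
      have : (d : ℝ) / 2 + (d : ℝ) / 2 = (d : ℝ) := by ring
      rw [this, Real.rpow_natCast]
    calc cG * cG = ((2 : ℝ) ^ ((d : ℝ) / 2) * (2 : ℝ) ^ ((d : ℝ) / 2)) *
          (Real.sqrt |B.det| * Real.sqrt |B.det|) := by rw [hcG]; ring
      _ = 2 ^ d * |B.det| := by rw [h1, h2]
  have hconst : |B.det|⁻¹ * (((Real.pi * ℏ) ^ (2 * d))⁻¹ *
      (|A.det| * (cG * (cG * |B.det|⁻¹)))) = 2 ^ d := by
    rw [habsA, ← mul_assoc cG, hcGsq]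
    have habs0 : |B.det| ≠ 0 := abs_ne_zero.2 hdet
    have hpow0 : (Real.pi * ℏ) ^ (2 * d) ≠ 0 := pow_ne_zero _ (ne_of_gt hπℏ)
    field_simp
  rw [hmoyal, h3, h5]
  simp only [Kker]
  rw [← hZ, Complex.real_smul, Complex.real_smul]
  have h6 : ((2 : ℝ) : ℂ) ^ d = (((2 : ℝ) ^ d : ℝ) : ℂ) := by push_cast; ring
  rw [h6, ← hconst]
  push_cast
  ring

/-- **Convolution-kernel identity for the adapted quantization.**
For every bounded continuous `a : ℝ^{2d} → ℂ`,
`(a ⋆ (G_B ♯ G_B))(ρ) = ∫ a(ρ + B⁻¹ρ₀) K(ρ₀) dρ₀`. -/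
theorem adapted_quantization_convolution_kernel
    (d : ℕ) (ℏ : ℝ) (hℏ : 0 < ℏ)
    (B : Matrix (Fin d ⊕ Fin d) (Fin d ⊕ Fin d) ℝ) (hB : IsUnit B.det)
    (a : ((Fin d ⊕ Fin d) → ℝ) → ℂ) (ha : Continuous a)
    (hbd : ∃ C : ℝ, ∀ x, ‖a x‖ ≤ C) (ρ : (Fin d ⊕ Fin d) → ℝ) :
    (∫ ρ₀ : (Fin d ⊕ Fin d) → ℝ,
        a ρ₀ * moyal d ℏ (fun w => (GB B w : ℂ)) (fun w => (GB B w : ℂ)) (ρ - ρ₀))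
      = ∫ ρ₀ : (Fin d ⊕ Fin d) → ℝ, a (ρ + B⁻¹.mulVec ρ₀) * Kker d ℏ B ρ₀ := by
  have hdet : B.det ≠ 0 := isUnit_iff_ne_zero.mp hB
  have hBinvdet : (B⁻¹).det ≠ 0 := by
    rw [Matrix.det_nonsing_inv, Ring.inverse_eq_inv']
    exact inv_ne_zero hdet
  set g : ((Fin d ⊕ Fin d) → ℝ) → ℂ := fun x =>
    a x * moyal d ℏ (fun w => (GB B w : ℂ)) (fun w => (GB B w : ℂ)) (ρ - x) with hg
  set g' : ((Fin d ⊕ Fin d) → ℝ) → ℂ := fun y => g (ρ + y) with hg'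
  have key : ∀ ρ₀ : (Fin d ⊕ Fin d) → ℝ,
      a (ρ + B⁻¹.mulVec ρ₀) * Kker d ℏ B ρ₀ = (|B.det|⁻¹ : ℝ) • g' (B⁻¹.mulVec ρ₀) := by
    intro ρ₀
    rw [hg', hg]
    simp only
    rw [Kker_eq hℏ B hB ρ₀]
    rw [show ρ - (ρ + B⁻¹.mulVec ρ₀) = -(B⁻¹.mulVec ρ₀) by abel]
    rw [mul_smul_comm]
  symm
  calc ∫ ρ₀ : (Fin d ⊕ Fin d) → ℝ, a (ρ + B⁻¹.mulVec ρ₀) * Kker d ℏ B ρ₀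
      = ∫ ρ₀ : (Fin d ⊕ Fin d) → ℝ, (|B.det|⁻¹ : ℝ) • g' (B⁻¹.mulVec ρ₀) :=
        integral_congr_ae (Filter.Eventually.of_forall key)
    _ = (|B.det|⁻¹ : ℝ) • ∫ ρ₀ : (Fin d ⊕ Fin d) → ℝ, g' (B⁻¹.mulVec ρ₀) :=
        integral_smul _ _
    _ = (|B.det|⁻¹ : ℝ) • (|(B⁻¹).det|⁻¹ • ∫ y, g' y) := by
        rw [integral_comp_mulVec B⁻¹ hBinvdet g']
    _ = ∫ y, g' y := by
        rw [smul_smul, Matrix.det_nonsing_inv, Ring.inverse_eq_inv', abs_inv, inv_inv,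
          inv_mul_cancel₀ (abs_ne_zero.2 hdet), one_smul]
    _ = ∫ y, g (ρ + y) := by rw [hg']
    _ = ∫ x, g x := MeasureTheory.integral_add_left_eq_self g ρ
    _ = _ := by rw [hg]

end
end

section
/- Iterated subadditivity of translated entropies (Appendix C, corollary): Let μ be a Borel probability measure on T^{2d}, A an automorphism of T^{2d} induced by a matrix in GL(2d,Z), and P₁,…,P_K : T^{2d} → [0,1] continuous with Σ_{i=1}^K P_i² ≡ 1. Then for all integers m₀ ≥ 1, q ≥ 1 and 0 ≤ r < m₀, setting m := q·m₀ + r, one has h_{2m}(μ) ≤ h_{2r}^{−q m₀}(μ) + Σ_{j=1}^{q} h_{2m₀}^{−(q+1−2j)m₀ + r}(μ). -/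
open MeasureTheory

noncomputable section

/-- The `2d`-torus `ℝ^{2d}/ℤ^{2d}`. -/
abbrev Torus (d : ℕ) := Fin (2 * d) → AddCircle (1 : ℝ)

/-- The map on the torus induced by an integer matrix. -/
def tmap {d : ℕ} (M : Matrix (Fin (2 * d)) (Fin (2 * d)) ℤ) (x : Torus d) : Torus d :=
  fun i => ∑ j, M i j • x j

/-- `η(x) = -x log x` (with `η(0) = 0`). -/
def etaF (x : ℝ) : ℝ := -(x * Real.log x)

/-- The translated entropy `h_{2m}^p(μ)` of a smooth partition `P` with respect to the
toral automorphism induced by `A ∈ GL(2d,ℤ)`: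
`h_{2m}^p(μ) = ∑_α η(∫ ∏_{j=-m}^{m-1} P_{α_j}² ∘ A^{j+p} dμ)`. -/
def transEnt {d K : ℕ} (μ : Measure (Torus d))
    (A : (Matrix (Fin (2 * d)) (Fin (2 * d)) ℤ)ˣ)
    (P : Fin K → Torus d → ℝ) (m : ℕ) (p : ℤ) : ℝ :=
  ∑ α : Fin (2 * m) → Fin K,
    etaF (∫ x, ∏ j : Fin (2 * m),
      (P (α j) (tmap ((A ^ ((j : ℤ) - (m : ℤ) + p) : (Matrix (Fin (2 * d)) (Fin (2 * d)) ℤ)ˣ) : Matrix (Fin (2 * d)) (Fin (2 * d)) ℤ) x)) ^ 2 ∂μ)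

/-! ### Auxiliary development -/

section Aux
set_option linter.unusedSectionVars false

lemma key_pointwise' {p x y : ℝ} (hp : 0 ≤ p) (hpx : p ≤ x) (hpy : p ≤ y) :
    p - x * y ≤ p * Real.log p - p * Real.log x - p * Real.log y := by
  rcases eq_or_lt_of_le hp with h | h
  · rw [← h]; simp; nlinarith
  · have hx' : 0 < x := lt_of_lt_of_le h hpx
    have hy' : 0 < y := lt_of_lt_of_le h hpy
    have hxy : 0 < x * y / p := by positivity
    have h1 := Real.log_le_sub_one_of_pos hxy
    have hlog : Real.log (x * y / p) = Real.log x + Real.log y - Real.log p := by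
      rw [Real.log_div (by positivity) (ne_of_gt h), Real.log_mul (ne_of_gt hx') (ne_of_gt hy')]
    rw [hlog] at h1
    have h2 := mul_le_mul_of_nonneg_left h1 hp
    have h3 : p * (x * y / p - 1) = x * y - p := by field_simp
    nlinarith [h2, h3]

lemma entropy_subadd {σ τ : Type} [Fintype σ] [Fintype τ]
    (w : σ → τ → ℝ) (hw : ∀ a b, 0 ≤ w a b) (hsum : ∑ a, ∑ b, w a b = 1) :
    ∑ a, ∑ b, etaF (w a b) ≤ ∑ a, etaF (∑ b, w a b) + ∑ b, etaF (∑ a, w a b) := by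
  have key : ∀ a b, w a b - (∑ b', w a b') * (∑ a', w a' b) ≤
      w a b * Real.log (w a b) - w a b * Real.log (∑ b', w a b') -
        w a b * Real.log (∑ a', w a' b) := fun a b =>
    key_pointwise' (hw a b) (Finset.single_le_sum (fun c _ => hw a c) (Finset.mem_univ b))
      (Finset.single_le_sum (fun c _ => hw c b) (Finset.mem_univ a))
  have hprod : ∑ a, ∑ b, ((∑ b', w a b') * (∑ a', w a' b)) = 1 := by
    have := Finset.sum_mul_sum (Finset.univ (α := σ)) (Finset.univ (α := τ))
      (fun a => ∑ b', w a b') (fun b => ∑ a', w a' b)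
    rw [← this, hsum, ← Finset.sum_comm (f := w)]
    · rw [hsum, one_mul]
  have hkey : (0:ℝ) ≤ ∑ a, ∑ b, (w a b * Real.log (w a b) - w a b * Real.log (∑ b', w a b') -
      w a b * Real.log (∑ a', w a' b)) := by
    have h1 : ∑ a, ∑ b, (w a b - (∑ b', w a b') * (∑ a', w a' b)) = 0 := by
      simp only [Finset.sum_sub_distrib, hsum, hprod, sub_self]
    rw [← h1]
    exact Finset.sum_le_sum fun a _ => Finset.sum_le_sum fun b _ => key a b
  have eX : ∑ a, etaF (∑ b, w a b) = ∑ a, ∑ b, -(w a b * Real.log (∑ b', w a b')) := by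
    refine Finset.sum_congr rfl fun a _ => ?_
    rw [etaF, Finset.sum_mul, ← Finset.sum_neg_distrib]
  have eY : ∑ b, etaF (∑ a, w a b) = ∑ a, ∑ b, -(w a b * Real.log (∑ a', w a' b)) := by
    rw [Finset.sum_comm]
    refine Finset.sum_congr rfl fun b _ => ?_
    rw [etaF, Finset.sum_mul, ← Finset.sum_neg_distrib]
  rw [eX, eY]
  simp only [etaF, ← Finset.sum_add_distrib]
  rw [← sub_nonneg, ← Finset.sum_sub_distrib]
  simp only [← Finset.sum_sub_distrib]
  convert hkey using 3 with a _ b _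
  ring

lemma tmap_continuous {d : ℕ} (M : Matrix (Fin (2 * d)) (Fin (2 * d)) ℤ) :
    Continuous (tmap M) :=
  continuous_pi fun i => continuous_finset_sum _ fun j _ =>
    (continuous_zsmul (M i j)).comp (continuous_apply j)

variable {d K : ℕ} (μ : Measure (Torus d))
  (A : (Matrix (Fin (2 * d)) (Fin (2 * d)) ℤ)ˣ)
  (P : Fin K → Torus d → ℝ)

/-- The word function associated to a word `α` with exponent pattern `e`. -/
def wordF (ι : Type) [Fintype ι] (e : ι → ℤ) (α : ι → Fin K) (x : Torus d) : ℝ :=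
  ∏ j, (P (α j) (tmap ((A ^ e j : (Matrix (Fin (2 * d)) (Fin (2 * d)) ℤ)ˣ) :
      Matrix (Fin (2 * d)) (Fin (2 * d)) ℤ) x)) ^ 2

/-- Generalized word entropy over an arbitrary finite index type. -/
def gEnt (ι : Type) [Fintype ι] [DecidableEq ι] (e : ι → ℤ) : ℝ :=
  ∑ α : ι → Fin K, etaF (∫ x, wordF A P ι e α x ∂μ)

lemma transEnt_eq_gEnt (m : ℕ) (p : ℤ) :
    transEnt μ A P m p = gEnt μ A P (Fin (2 * m)) (fun j => (j : ℤ) - (m : ℤ) + p) := rfl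

variable {ι : Type} [Fintype ι] [DecidableEq ι] {e : ι → ℤ}

lemma wordF_cont (hcont : ∀ i, Continuous (P i)) (α : ι → Fin K) :
    Continuous (wordF A P ι e α) :=
  continuous_finset_prod _ fun j _ => (((hcont (α j)).comp (tmap_continuous _)).pow 2)

lemma wordF_nonneg (α : ι → Fin K) (x : Torus d) : 0 ≤ wordF A P ι e α x :=
  Finset.prod_nonneg fun _ _ => sq_nonneg _

lemma wordF_le_one (hrange : ∀ i x, P i x ∈ Set.Icc (0 : ℝ) 1) (α : ι → Fin K)
    (x : Torus d) : wordF A P ι e α x ≤ 1 :=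
  Finset.prod_le_one (fun _ _ => sq_nonneg _) fun j _ => by
    have h := hrange (α j) (tmap ((A ^ e j : (Matrix (Fin (2 * d)) (Fin (2 * d)) ℤ)ˣ) :
      Matrix (Fin (2 * d)) (Fin (2 * d)) ℤ) x)
    nlinarith [h.1, h.2]

lemma wordF_sum (hpart : ∀ x, ∑ i, (P i x) ^ 2 = 1) (x : Torus d) :
    ∑ α : ι → Fin K, wordF A P ι e α x = 1 := by
  have h := Fintype.prod_sum (κ := fun _ : ι => Fin K)
    (f := fun j i => (P i (tmap ((A ^ e j : (Matrix (Fin (2 * d)) (Fin (2 * d)) ℤ)ˣ) :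
      Matrix (Fin (2 * d)) (Fin (2 * d)) ℤ) x)) ^ 2)
  simp only [wordF]
  rw [← h]
  exact Finset.prod_eq_one fun j _ => hpart _

lemma gEnt_reindex {ι' : Type} [Fintype ι'] [DecidableEq ι']
    (σ : ι ≃ ι') (e : ι' → ℤ) :
    gEnt μ A P ι (e ∘ σ) = gEnt μ A P ι' e := by
  refine Fintype.sum_equiv (Equiv.arrowCongr σ (Equiv.refl (Fin K))) _ _ fun α => ?_
  congr 1
  refine integral_congr_ae (Filter.Eventually.of_forall fun x => ?_)
  refine Fintype.prod_equiv σ _ _ fun j => ?_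
  simp [Equiv.arrowCongr_apply, Function.comp]

variable [IsProbabilityMeasure μ]

lemma wordF_integrable (hcont : ∀ i, Continuous (P i))
    (hrange : ∀ i x, P i x ∈ Set.Icc (0 : ℝ) 1) (α : ι → Fin K) :
    Integrable (wordF A P ι e α) μ := by
  refine (integrable_const (1:ℝ)).mono'
    ((wordF_cont A P hcont α).aestronglyMeasurable) ?_
  exact ae_of_all _ fun x => by
    rw [Real.norm_eq_abs, abs_of_nonneg (wordF_nonneg A P α x)]
    exact wordF_le_one A P hrange α x

lemma gEnt_subadd (hcont : ∀ i, Continuous (P i))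
    (hrange : ∀ i x, P i x ∈ Set.Icc (0 : ℝ) 1)
    (hpart : ∀ x, ∑ i, (P i x) ^ 2 = 1)
    (ι₁ ι₂ : Type) [Fintype ι₁] [DecidableEq ι₁] [Fintype ι₂] [DecidableEq ι₂]
    (e₁ : ι₁ → ℤ) (e₂ : ι₂ → ℤ) :
    gEnt μ A P (ι₁ ⊕ ι₂) (Sum.elim e₁ e₂) ≤ gEnt μ A P ι₁ e₁ + gEnt μ A P ι₂ e₂ := by
  set w : (ι₁ → Fin K) → (ι₂ → Fin K) → ℝ := fun α β =>
    ∫ x, wordF A P ι₁ e₁ α x * wordF A P ι₂ e₂ β x ∂μ with hw_def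
  have hsplit : ∀ (γ : ι₁ ⊕ ι₂ → Fin K) (x : Torus d),
      wordF A P (ι₁ ⊕ ι₂) (Sum.elim e₁ e₂) γ x
        = wordF A P ι₁ e₁ (γ ∘ Sum.inl) x * wordF A P ι₂ e₂ (γ ∘ Sum.inr) x := by
    intro γ x
    simp only [wordF]
    exact Fintype.prod_sum_type _
  have hmulint : ∀ α β, Integrable
      (fun x => wordF A P ι₁ e₁ α x * wordF A P ι₂ e₂ β x) μ := by
    intro α β
    refine (integrable_const (1:ℝ)).mono'
      (((wordF_cont A P hcont α).mul (wordF_cont A P hcont β)).aestronglyMeasurable) ?_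
    refine ae_of_all _ fun x => ?_
    rw [Real.norm_eq_abs, abs_of_nonneg (mul_nonneg (wordF_nonneg A P α x) (wordF_nonneg A P β x))]
    exact mul_le_one₀ (wordF_le_one A P hrange α x) (wordF_nonneg A P β x)
      (wordF_le_one A P hrange β x)
  have hw : ∀ α β, 0 ≤ w α β := fun α β =>
    integral_nonneg fun x => mul_nonneg (wordF_nonneg A P α x) (wordF_nonneg A P β x)
  have hmarg1 : ∀ α, ∑ β, w α β = ∫ x, wordF A P ι₁ e₁ α x ∂μ := by
    intro α
    rw [hw_def, ← integral_finset_sum _ (fun β _ => hmulint α β)]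
    refine integral_congr_ae (Filter.Eventually.of_forall fun x => ?_)
    dsimp only
    rw [← Finset.mul_sum, wordF_sum A P hpart x, mul_one]
  have hmarg2 : ∀ β, ∑ α, w α β = ∫ x, wordF A P ι₂ e₂ β x ∂μ := by
    intro β
    rw [hw_def, ← integral_finset_sum _ (fun α _ => hmulint α β)]
    refine integral_congr_ae (Filter.Eventually.of_forall fun x => ?_)
    dsimp only
    rw [← Finset.sum_mul, wordF_sum A P hpart x, one_mul]
  have hsum : ∑ α, ∑ β, w α β = 1 := by
    rw [Finset.sum_congr rfl fun α _ => hmarg1 α,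
      ← integral_finset_sum _ (fun α _ => wordF_integrable μ A P hcont hrange α)]
    rw [integral_congr_ae (Filter.Eventually.of_forall fun x => wordF_sum A P hpart x)]
    simp
  have hLHS : gEnt μ A P (ι₁ ⊕ ι₂) (Sum.elim e₁ e₂) = ∑ α, ∑ β, etaF (w α β) := by
    have hpt : ∑ p : (ι₁ → Fin K) × (ι₂ → Fin K), etaF (w p.1 p.2)
        = ∑ α, ∑ β, etaF (w α β) := Fintype.sum_prod_type _
    rw [gEnt, ← hpt]
    refine Fintype.sum_equiv (Equiv.sumArrowEquivProdArrow ι₁ ι₂ (Fin K)) _ _ fun γ => ?_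
    simp only [Equiv.sumArrowEquivProdArrow, Equiv.coe_fn_mk, hw_def]
    congr 1
    exact integral_congr_ae (Filter.Eventually.of_forall fun x => hsplit γ x)
  have hR1 : gEnt μ A P ι₁ e₁ = ∑ α, etaF (∑ β, w α β) := by
    rw [gEnt]; exact Finset.sum_congr rfl fun α _ => by rw [hmarg1]
  have hR2 : gEnt μ A P ι₂ e₂ = ∑ β, etaF (∑ α, w α β) := by
    rw [gEnt]; exact Finset.sum_congr rfl fun β _ => by rw [hmarg2]
  rw [hLHS, hR1, hR2]
  exact entropy_subadd w hw hsum

lemma gEnt_empty (e : Fin 0 → ℤ) : gEnt μ A P (Fin 0) e = 0 := by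
  haveI : Unique (Fin 0 → Fin K) :=
    ⟨⟨fun j => j.elim0⟩, fun f => funext fun j => j.elim0⟩
  rw [gEnt, Fintype.sum_unique]
  have : ∀ x : Torus d, wordF A P (Fin 0) e default x = 1 := fun x => by
    simp [wordF]
  rw [integral_congr_ae (Filter.Eventually.of_forall this)]
  simp [etaF]

/-- splitting an interval block of length `2m₀t` into `t` blocks of length `2m₀`. -/
lemma gEnt_blocks (hcont : ∀ i, Continuous (P i))
    (hrange : ∀ i x, P i x ∈ Set.Icc (0 : ℝ) 1)
    (hpart : ∀ x, ∑ i, (P i x) ^ 2 = 1) (m₀ : ℕ) (a : ℤ) :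
    ∀ t : ℕ, gEnt μ A P (Fin (2 * m₀ * t)) (fun j => a + (j : ℤ)) ≤
      ∑ j ∈ Finset.range t, gEnt μ A P (Fin (2 * m₀))
        (fun i => a + 2 * (m₀ : ℤ) * (j : ℤ) + (i : ℤ)) := by
  intro t
  induction t with
  | zero =>
      rw [Finset.range_zero, Finset.sum_empty]
      have h0 : (2 * m₀ * 0) = 0 := by ring
      have := gEnt_reindex μ A P (finCongr h0.symm) (fun j : Fin (2 * m₀ * 0) => a + (j : ℤ))
      rw [← this, gEnt_empty]
  | succ t ih =>
      have hcard : 2 * m₀ * t + 2 * m₀ = 2 * m₀ * (t + 1) := by ring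
      set E : Fin (2 * m₀ * t) ⊕ Fin (2 * m₀) ≃ Fin (2 * m₀ * (t + 1)) :=
        finSumFinEquiv.trans (finCongr hcard) with hE
      have he : (fun j : Fin (2 * m₀ * (t + 1)) => a + (j : ℤ)) ∘ E
          = Sum.elim (fun j : Fin (2 * m₀ * t) => a + (j : ℤ))
              (fun i : Fin (2 * m₀) => a + 2 * (m₀ : ℤ) * (t : ℤ) + (i : ℤ)) := by
        funext x
        cases x with
        | inl j => simp [hE, finCongr, Fin.coe_castAdd]
        | inr i =>
            simp only [Function.comp_apply, hE, Equiv.trans_apply, finSumFinEquiv_apply_right,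
              finCongr_apply, Fin.coe_cast, Fin.coe_natAdd, Sum.elim_inr]
            push_cast
            ring
      have h1 : gEnt μ A P (Fin (2 * m₀ * (t + 1))) (fun j => a + (j : ℤ))
          = gEnt μ A P (Fin (2 * m₀ * t) ⊕ Fin (2 * m₀))
              (Sum.elim (fun j : Fin (2 * m₀ * t) => a + (j : ℤ))
                (fun i : Fin (2 * m₀) => a + 2 * (m₀ : ℤ) * (t : ℤ) + (i : ℤ))) := by
        rw [← gEnt_reindex μ A P E (fun j : Fin (2 * m₀ * (t + 1)) => a + (j : ℤ)), he]
      rw [h1, Finset.sum_range_succ]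
      calc gEnt μ A P (Fin (2 * m₀ * t) ⊕ Fin (2 * m₀)) _
          ≤ gEnt μ A P (Fin (2 * m₀ * t)) (fun j => a + (j : ℤ)) +
            gEnt μ A P (Fin (2 * m₀)) (fun i => a + 2 * (m₀ : ℤ) * (t : ℤ) + (i : ℤ)) :=
            gEnt_subadd μ A P hcont hrange hpart _ _ _ _
        _ ≤ _ := by exact add_le_add_left ih _

end Aux

/-- **Iterated subadditivity of translated entropies**: for `m = q m₀ + r`,
`h_{2m}(μ) ≤ h_{2r}^{-q m₀}(μ) + ∑_{j=1}^{q} h_{2m₀}^{-(q+1-2j)m₀ + r}(μ)`. -/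
theorem translated_entropy_iterated_subadditive
    {d K : ℕ} (μ : Measure (Torus d)) [IsProbabilityMeasure μ]
    (A : (Matrix (Fin (2 * d)) (Fin (2 * d)) ℤ)ˣ)
    (P : Fin K → Torus d → ℝ)
    (hcont : ∀ i, Continuous (P i))
    (hrange : ∀ i x, P i x ∈ Set.Icc (0 : ℝ) 1)
    (hpart : ∀ x, ∑ i, (P i x) ^ 2 = 1)
    (m₀ q r : ℕ) (hm₀ : 1 ≤ m₀) (hq : 1 ≤ q) (hr : r < m₀) :
    transEnt μ A P (q * m₀ + r) 0
      ≤ transEnt μ A P r (-(q * m₀ : ℤ)) +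
          ∑ j ∈ Finset.Icc (1 : ℤ) (q : ℤ),
            transEnt μ A P m₀ (-((q : ℤ) + 1 - 2 * j) * (m₀ : ℤ) + (r : ℤ)) := by
  set m : ℕ := q * m₀ + r with hm
  set a : ℤ := -(q : ℤ) * (m₀ : ℤ) + (r : ℤ) with ha
  have hcard : 2 * r + 2 * m₀ * q = 2 * m := by rw [hm]; ring
  set E : Fin (2 * r) ⊕ Fin (2 * m₀ * q) ≃ Fin (2 * m) :=
    finSumFinEquiv.trans (finCongr hcard) with hE
  have he : (fun j : Fin (2 * m) => (j : ℤ) - (m : ℤ) + 0) ∘ E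
      = Sum.elim (fun j : Fin (2 * r) => (j : ℤ) - (r : ℤ) + (-(q * m₀ : ℤ)))
          (fun j : Fin (2 * m₀ * q) => a + (j : ℤ)) := by
    funext x
    cases x with
    | inl j =>
        simp only [Function.comp_apply, hE, Equiv.trans_apply, finSumFinEquiv_apply_left,
          finCongr_apply, Fin.coe_cast, Fin.coe_castAdd, Sum.elim_inl, hm]
        push_cast
        ring
    | inr j =>
        simp only [Function.comp_apply, hE, Equiv.trans_apply, finSumFinEquiv_apply_right,
          finCongr_apply, Fin.coe_cast, Fin.coe_natAdd, Sum.elim_inr, hm, ha]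
        push_cast
        ring
  have step1 : transEnt μ A P m 0
      ≤ transEnt μ A P r (-(q * m₀ : ℤ)) + gEnt μ A P (Fin (2 * m₀ * q)) (fun j => a + (j : ℤ)) := by
    rw [transEnt_eq_gEnt, ← gEnt_reindex μ A P E (fun j : Fin (2 * m) => (j : ℤ) - (m : ℤ) + 0), he]
    rw [transEnt_eq_gEnt]
    exact gEnt_subadd μ A P hcont hrange hpart _ _ _ _
  have step2 := gEnt_blocks μ A P hcont hrange hpart m₀ a q
  have step3 : ∑ j ∈ Finset.range q, gEnt μ A P (Fin (2 * m₀))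
        (fun i => a + 2 * (m₀ : ℤ) * (j : ℤ) + (i : ℤ))
      = ∑ j ∈ Finset.Icc (1 : ℤ) (q : ℤ),
          transEnt μ A P m₀ (-((q : ℤ) + 1 - 2 * j) * (m₀ : ℤ) + (r : ℤ)) := by
    have hIcc : Finset.Icc (1 : ℤ) (q : ℤ)
        = (Finset.range q).map (⟨fun n : ℕ => (n : ℤ) + 1, fun x y h => by dsimp only at h; omega⟩ : ℕ ↪ ℤ) := by
      ext x
      simp only [Finset.mem_Icc, Finset.mem_map, Finset.mem_range, Function.Embedding.coeFn_mk]
      dsimp only [DFunLike.coe]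
      constructor
      · rintro ⟨h1, h2⟩
        exact ⟨(x - 1).toNat, by omega, by omega⟩
      · rintro ⟨n, hn, rfl⟩
        omega
    rw [hIcc, Finset.sum_map]
    refine Finset.sum_congr rfl fun n _ => ?_
    rw [transEnt_eq_gEnt]
    congr 1
    funext i
    simp only [Function.Embedding.coeFn_mk, ha]
    dsimp only [DFunLike.coe]
    push_cast
    ring
  calc transEnt μ A P m 0
      ≤ transEnt μ A P r (-(q * m₀ : ℤ)) + gEnt μ A P (Fin (2 * m₀ * q)) (fun j => a + (j : ℤ)) := step1
    _ ≤ transEnt μ A P r (-(q * m₀ : ℤ)) + ∑ j ∈ Finset.range q, gEnt μ A P (Fin (2 * m₀))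
          (fun i => a + 2 * (m₀ : ℤ) * (j : ℤ) + (i : ℤ)) := add_le_add_right step2 _
    _ = _ := by rw [step3]

end
end

section
/- Subexponential growth for matrices with unimodular spectrum: Let M be an invertible real k×k matrix all of whose complex eigenvalues have modulus 1. Then for every ε > 0 there exists C ≥ 1 such that for every integer n ≥ 0 and every v ∈ R^k, C^{−1} e^{−nε} ‖v‖ ≤ ‖M^n v‖ ≤ C e^{nε} ‖v‖, where ‖·‖ is the Euclidean norm. -/
open Filter Polynomial

namespace SubexpAux

attribute [local instance] Matrix.linftyOpNormedRing Matrix.linftyOpNormedAlgebra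

variable {k : ℕ}

lemma eval_charpoly (A : Matrix (Fin k) (Fin k) ℂ) (z : ℂ) :
    A.charpoly.eval z = (algebraMap ℂ (Matrix (Fin k) (Fin k) ℂ) z - A).det := by
  have : A.charpoly.eval z = ((A.charmatrix).map (Polynomial.evalRingHom z)).det :=
    RingHom.map_det (Polynomial.evalRingHom z) A.charmatrix
  rw [this]
  congr 1
  ext i j
  by_cases h : i = j
  · subst h
    simp [Matrix.map_apply, Matrix.algebraMap_matrix_apply, Matrix.sub_apply]
  · simp [Matrix.map_apply, Matrix.algebraMap_matrix_apply, Matrix.sub_apply, h,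
      Matrix.charmatrix_apply_ne _ _ _ h]

lemma mem_spectrum_iff (A : Matrix (Fin k) (Fin k) ℂ) (z : ℂ) :
    z ∈ spectrum ℂ A ↔ A.charpoly.IsRoot z := by
  rw [spectrum.mem_iff, Matrix.isUnit_iff_isUnit_det, isUnit_iff_ne_zero, not_ne_iff,
    Polynomial.IsRoot, eval_charpoly]

lemma norm_pow_le (A : Matrix (Fin k) (Fin k) ℂ)
    (h : ∀ z ∈ spectrum ℂ A, ‖z‖ ≤ 1) {ε : ℝ} (hε : 0 < ε) :
    ∃ C : ℝ, 1 ≤ C ∧ ∀ n : ℕ, ‖A ^ n‖ ≤ C * Real.exp (n * ε) := by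
  have hsr : spectralRadius ℂ A ≤ 1 := by
    rw [spectralRadius]
    refine iSup₂_le fun z hz => ?_
    have := h z hz
    simpa using ENNReal.coe_le_one_iff.mpr (by exact_mod_cast this)
  have hexp1 : (1 : ℝ) < Real.exp ε := by
    have := Real.add_one_le_exp ε
    linarith
  have hlt : spectralRadius ℂ A < ENNReal.ofReal (Real.exp ε) := by
    refine hsr.trans_lt ?_
    rw [← ENNReal.ofReal_one]
    exact (ENNReal.ofReal_lt_ofReal_iff (by positivity)).mpr hexp1
  have hev : ∀ᶠ n : ℕ in atTop,
      ENNReal.ofReal (‖A ^ n‖ ^ (1 / (n : ℝ))) < ENNReal.ofReal (Real.exp ε) :=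
    (spectrum.pow_norm_pow_one_div_tendsto_nhds_spectralRadius A).eventually_lt_const hlt
  obtain ⟨N, hN⟩ := eventually_atTop.mp hev
  refine ⟨1 + ∑ m ∈ Finset.range (max N 1), ‖A ^ m‖, ?_, ?_⟩
  · have : (0:ℝ) ≤ ∑ m ∈ Finset.range (max N 1), ‖A ^ m‖ :=
      Finset.sum_nonneg fun _ _ => norm_nonneg _
    linarith
  · intro n
    set C := 1 + ∑ m ∈ Finset.range (max N 1), ‖A ^ m‖ with hC
    have hC0 : (0:ℝ) ≤ C := by
      have : (0:ℝ) ≤ ∑ m ∈ Finset.range (max N 1), ‖A ^ m‖ :=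
        Finset.sum_nonneg fun _ _ => norm_nonneg _
      linarith
    have hexp0 : (1:ℝ) ≤ Real.exp (n * ε) := by
      rw [Real.one_le_exp_iff]; positivity
    rcases lt_or_ge n (max N 1) with hn | hn
    · have h1 : ‖A ^ n‖ ≤ ∑ m ∈ Finset.range (max N 1), ‖A ^ m‖ :=
        Finset.single_le_sum (f := fun m => ‖A ^ m‖) (fun _ _ => norm_nonneg _)
          (Finset.mem_range.mpr hn)
      have h2 : ‖A ^ n‖ ≤ C := by simpa [hC] using h1.trans (by linarith)
      calc ‖A ^ n‖ ≤ C := h2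
        _ ≤ C * Real.exp (n * ε) := le_mul_of_one_le_right hC0 hexp0
    · have hn1 : 1 ≤ n := le_trans (le_max_right _ _) hn
      have hnN : N ≤ n := le_trans (le_max_left _ _) hn
      have h1 := hN n hnN
      have h2 : ‖A ^ n‖ ^ (1 / (n : ℝ)) < Real.exp ε := by
        have := (ENNReal.ofReal_lt_ofReal_iff (by positivity)).mp h1
        exact this
      have hne : (n : ℝ) ≠ 0 := by positivity
      have h3 : ‖A ^ n‖ = (‖A ^ n‖ ^ (1 / (n : ℝ))) ^ (n : ℕ) := by
        rw [← Real.rpow_natCast (‖A ^ n‖ ^ (1 / (n : ℝ))) n, ← Real.rpow_mul (norm_nonneg _),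
          one_div_mul_cancel hne, Real.rpow_one]
      have h4 : ‖A ^ n‖ ≤ Real.exp ε ^ n := by
        rw [h3]
        exact pow_le_pow_left₀ (Real.rpow_nonneg (norm_nonneg _) _) h2.le n
      calc ‖A ^ n‖ ≤ Real.exp ε ^ n := h4
        _ = Real.exp (n * ε) := (Real.exp_nat_mul ε n).symm
        _ ≤ C * Real.exp (n * ε) := le_mul_of_one_le_left (Real.exp_nonneg _) (by
            have : (0:ℝ) ≤ ∑ m ∈ Finset.range (max N 1), ‖A ^ m‖ :=
              Finset.sum_nonneg fun _ _ => norm_nonneg _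
            simp [hC]; linarith)

end SubexpAux

section Main

attribute [local instance] Matrix.linftyOpNormedRing Matrix.linftyOpNormedAlgebra

theorem SubexpAux.main
    {k : ℕ} (M : Matrix (Fin k) (Fin k) ℝ) (hM : IsUnit M.det)
    (hspec : ∀ z ∈ ((M.map (algebraMap ℝ ℂ)).charpoly).roots, ‖z‖ = 1) :
    ∀ ε : ℝ, 0 < ε → ∃ C : ℝ, 1 ≤ C ∧ ∀ n : ℕ, ∀ v : Fin k → ℝ,
      C⁻¹ * Real.exp (-(n * ε)) * Real.sqrt (∑ i, v i ^ 2)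
          ≤ Real.sqrt (∑ i, ((M ^ n).mulVec v i) ^ 2) ∧
      Real.sqrt (∑ i, ((M ^ n).mulVec v i) ^ 2)
          ≤ C * Real.exp (n * ε) * Real.sqrt (∑ i, v i ^ 2) := by
  intro ε hε
  set A := M.map (algebraMap ℝ ℂ) with hA
  have hAdet : IsUnit A.det := by
    rw [hA, ← RingHom.mapMatrix_apply, ← RingHom.map_det]
    exact hM.map (algebraMap ℝ ℂ)
  have hAunit : IsUnit A := (Matrix.isUnit_iff_isUnit_det A).mpr hAdet
  set u := hAunit.unit with hu
  -- spectrum of A has modulus one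
  have specA : ∀ z ∈ spectrum ℂ A, ‖z‖ = 1 := by
    intro z hz
    have hroot : A.charpoly.IsRoot z := (SubexpAux.mem_spectrum_iff A z).mp hz
    have hne : A.charpoly ≠ 0 := (Matrix.charpoly_monic A).ne_zero
    exact hspec z (Polynomial.mem_roots'.mpr ⟨hne, hroot⟩)
  have specA' : ∀ z ∈ spectrum ℂ A, ‖z‖ ≤ 1 := fun z hz => by
    rw [specA z hz]
  have specAinv : ∀ z ∈ spectrum ℂ ((↑u⁻¹ : Matrix (Fin k) (Fin k) ℂ)), ‖z‖ ≤ 1 := by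
    intro z hz
    have hz0 : z ≠ 0 := by
      rintro rfl
      exact spectrum.zero_notMem ℂ (u⁻¹).isUnit hz
    have key := (spectrum.inv_mem_iff (r := Units.mk0 z hz0) (a := u⁻¹)).mp hz
    rw [inv_inv, hAunit.unit_spec] at key
    have hzinv : ((↑(Units.mk0 z hz0)⁻¹ : ℂˣ) : ℂ) = z⁻¹ := by
      simp
    rw [hzinv] at key
    have : (z⁻¹ : ℂ) ∈ spectrum ℂ A := key
    have h1 : ‖z⁻¹‖ = 1 := specA _ this
    rw [norm_inv] at h1
    have : ‖z‖ = 1 := by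
      field_simp at h1
      simpa using h1.symm
    rw [this]
  obtain ⟨C₁, hC₁1, hC₁⟩ := SubexpAux.norm_pow_le A specA' hε
  obtain ⟨C₂, hC₂1, hC₂⟩ := SubexpAux.norm_pow_le (↑u⁻¹ : Matrix (Fin k) (Fin k) ℂ) specAinv hε
  set C : ℝ := max 1 ((Real.sqrt k + 1) * max C₁ C₂) with hCdef
  have hC1 : 1 ≤ C := le_max_left _ _
  have hC0 : 0 < C := lt_of_lt_of_le one_pos hC1
  refine ⟨C, hC1, ?_⟩
  intro n v
  -- basic norm facts
  have normw : ∀ x : Fin k → ℝ, ‖(fun i => (x i : ℂ))‖ = ‖x‖ := by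
    intro x
    simp only [Pi.norm_def, Pi.nnnorm_def, Complex.nnnorm_real]
  have h_le_S : ∀ x : Fin k → ℝ, ‖x‖ ≤ Real.sqrt (∑ i, x i ^ 2) := by
    intro x
    rw [pi_norm_le_iff_of_nonneg (Real.sqrt_nonneg _)]
    intro i
    rw [Real.norm_eq_abs, ← Real.sqrt_sq_eq_abs]
    exact Real.sqrt_le_sqrt (Finset.single_le_sum (f := fun j => x j ^ 2)
      (fun j _ => sq_nonneg _) (Finset.mem_univ i))
  have hS_le : ∀ x : Fin k → ℝ, Real.sqrt (∑ i, x i ^ 2) ≤ (Real.sqrt k + 1) * ‖x‖ := by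
    intro x
    have h1 : (∑ i, x i ^ 2) ≤ (k : ℝ) * ‖x‖ ^ 2 := by
      calc (∑ i, x i ^ 2) ≤ ∑ _i : Fin k, ‖x‖ ^ 2 := by
            refine Finset.sum_le_sum fun i _ => ?_
            calc x i ^ 2 = ‖x i‖ ^ 2 := by rw [Real.norm_eq_abs, sq_abs]
              _ ≤ ‖x‖ ^ 2 := pow_le_pow_left₀ (norm_nonneg _) (norm_le_pi_norm x i) 2
        _ = (k : ℝ) * ‖x‖ ^ 2 := by simp [Finset.sum_const, mul_comm]
    calc Real.sqrt (∑ i, x i ^ 2) ≤ Real.sqrt ((k : ℝ) * ‖x‖ ^ 2) := Real.sqrt_le_sqrt h1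
      _ = Real.sqrt k * ‖x‖ := by
          rw [Real.sqrt_mul (Nat.cast_nonneg k), Real.sqrt_sq (norm_nonneg _)]
      _ ≤ (Real.sqrt k + 1) * ‖x‖ :=
          mul_le_mul_of_nonneg_right (by linarith) (norm_nonneg _)
  -- complexified vector
  set w : Fin k → ℂ := fun i => (v i : ℂ) with hw
  have hApow : (M ^ n).map (algebraMap ℝ ℂ) = A ^ n := by
    rw [hA, ← RingHom.mapMatrix_apply, ← RingHom.mapMatrix_apply, map_pow]
  have hvecn : (fun i => (((M ^ n).mulVec v i : ℝ) : ℂ)) = (A ^ n).mulVec w := by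
    funext i
    rw [show ((((M ^ n).mulVec v i : ℝ)) : ℂ) = algebraMap ℝ ℂ ((M ^ n).mulVec v i) from
        (congrFun Complex.coe_algebraMap _).symm,
      RingHom.map_mulVec (algebraMap ℝ ℂ) (M ^ n) v i, hApow]
    rfl
  have hnormn : ‖(A ^ n).mulVec w‖ = ‖(M ^ n).mulVec v‖ := by
    rw [← hvecn]; exact normw _
  have hnormw : ‖w‖ = ‖v‖ := normw v
  -- upper bound
  have hupper : Real.sqrt (∑ i, ((M ^ n).mulVec v i) ^ 2)
      ≤ C * Real.exp (n * ε) * Real.sqrt (∑ i, v i ^ 2) := by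
    have h1 : ‖(A ^ n).mulVec w‖ ≤ ‖A ^ n‖ * ‖w‖ := Matrix.linfty_opNorm_mulVec _ _
    have h2 : ‖(M ^ n).mulVec v‖ ≤ C₁ * Real.exp (n * ε) * ‖v‖ := by
      rw [← hnormn, ← hnormw]
      calc ‖(A ^ n).mulVec w‖ ≤ ‖A ^ n‖ * ‖w‖ := h1
        _ ≤ (C₁ * Real.exp (n * ε)) * ‖w‖ :=
            mul_le_mul_of_nonneg_right (hC₁ n) (norm_nonneg _)
    calc Real.sqrt (∑ i, ((M ^ n).mulVec v i) ^ 2)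
        ≤ (Real.sqrt k + 1) * ‖(M ^ n).mulVec v‖ := hS_le _
      _ ≤ (Real.sqrt k + 1) * (C₁ * Real.exp (n * ε) * ‖v‖) :=
          mul_le_mul_of_nonneg_left h2 (by positivity)
      _ = ((Real.sqrt k + 1) * C₁) * Real.exp (n * ε) * ‖v‖ := by ring
      _ ≤ C * Real.exp (n * ε) * Real.sqrt (∑ i, v i ^ 2) := by
          refine mul_le_mul ?_ (h_le_S v) (norm_nonneg _) (by positivity)
          refine mul_le_mul_of_nonneg_right ?_ (Real.exp_nonneg _)
          calc (Real.sqrt k + 1) * C₁ ≤ (Real.sqrt k + 1) * max C₁ C₂ :=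
                mul_le_mul_of_nonneg_left (le_max_left _ _) (by positivity)
            _ ≤ C := le_max_right _ _
  -- lower bound
  have hlow : Real.sqrt (∑ i, v i ^ 2)
      ≤ C * Real.exp (n * ε) * Real.sqrt (∑ i, ((M ^ n).mulVec v i) ^ 2) := by
    have hwrec : w = ((↑u⁻¹ : Matrix (Fin k) (Fin k) ℂ) ^ n).mulVec ((A ^ n).mulVec w) := by
      rw [Matrix.mulVec_mulVec]
      have : (↑u⁻¹ : Matrix (Fin k) (Fin k) ℂ) ^ n * A ^ n = 1 := by
        rw [← hAunit.unit_spec, ← Units.val_pow_eq_pow_val, ← Units.val_pow_eq_pow_val,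
          ← Units.val_mul, inv_pow, inv_mul_cancel, Units.val_one]
      rw [this, Matrix.one_mulVec]
    have h1 : ‖w‖ ≤ C₂ * Real.exp (n * ε) * ‖(A ^ n).mulVec w‖ := by
      conv_lhs => rw [hwrec]
      calc ‖((↑u⁻¹ : Matrix (Fin k) (Fin k) ℂ) ^ n).mulVec ((A ^ n).mulVec w)‖
          ≤ ‖(↑u⁻¹ : Matrix (Fin k) (Fin k) ℂ) ^ n‖ * ‖(A ^ n).mulVec w‖ :=
            Matrix.linfty_opNorm_mulVec _ _
        _ ≤ C₂ * Real.exp (n * ε) * ‖(A ^ n).mulVec w‖ :=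
            mul_le_mul_of_nonneg_right (hC₂ n) (norm_nonneg _)
    calc Real.sqrt (∑ i, v i ^ 2) ≤ (Real.sqrt k + 1) * ‖v‖ := hS_le v
      _ = (Real.sqrt k + 1) * ‖w‖ := by rw [hnormw]
      _ ≤ (Real.sqrt k + 1) * (C₂ * Real.exp (n * ε) * ‖(A ^ n).mulVec w‖) :=
          mul_le_mul_of_nonneg_left h1 (by positivity)
      _ = ((Real.sqrt k + 1) * C₂) * Real.exp (n * ε) * ‖(M ^ n).mulVec v‖ := by
          rw [hnormn]; ring
      _ ≤ C * Real.exp (n * ε) * Real.sqrt (∑ i, ((M ^ n).mulVec v i) ^ 2) := by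
          refine mul_le_mul ?_ (h_le_S _) (norm_nonneg _) (by positivity)
          refine mul_le_mul_of_nonneg_right ?_ (Real.exp_nonneg _)
          calc (Real.sqrt k + 1) * C₂ ≤ (Real.sqrt k + 1) * max C₁ C₂ :=
                mul_le_mul_of_nonneg_left (le_max_right _ _) (by positivity)
            _ ≤ C := le_max_right _ _
  refine ⟨?_, hupper⟩
  have hkey : C⁻¹ * Real.exp (-(n * ε)) *
      (C * Real.exp (n * ε) * Real.sqrt (∑ i, ((M ^ n).mulVec v i) ^ 2))
      = Real.sqrt (∑ i, ((M ^ n).mulVec v i) ^ 2) := by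
    rw [Real.exp_neg]
    field_simp
  calc C⁻¹ * Real.exp (-(n * ε)) * Real.sqrt (∑ i, v i ^ 2)
      ≤ C⁻¹ * Real.exp (-(n * ε)) *
        (C * Real.exp (n * ε) * Real.sqrt (∑ i, ((M ^ n).mulVec v i) ^ 2)) :=
        mul_le_mul_of_nonneg_left hlow (by positivity)
    _ = _ := hkey

end Main


/-- **Subexponential growth for matrices with unimodular spectrum.**
If all complex eigenvalues of an invertible real `k × k` matrix `M` have modulus `1`,
then for every `ε > 0` there is `C ≥ 1` with
`C⁻¹ e^{-nε} ‖v‖ ≤ ‖Mⁿ v‖ ≤ C e^{nε} ‖v‖` for all `n ≥ 0` and all `v ∈ ℝ^k`. -/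
theorem subexponential_growth_unimodular_spectrum
    {k : ℕ} (M : Matrix (Fin k) (Fin k) ℝ) (hM : IsUnit M.det)
    (hspec : ∀ z ∈ ((M.map (algebraMap ℝ ℂ)).charpoly).roots, ‖z‖ = 1) :
    ∀ ε : ℝ, 0 < ε → ∃ C : ℝ, 1 ≤ C ∧ ∀ n : ℕ, ∀ v : Fin k → ℝ,
      C⁻¹ * Real.exp (-(n * ε)) * Real.sqrt (∑ i, v i ^ 2)
          ≤ Real.sqrt (∑ i, ((M ^ n).mulVec v i) ^ 2) ∧
      Real.sqrt (∑ i, ((M ^ n).mulVec v i) ^ 2)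
          ≤ C * Real.exp (n * ε) * Real.sqrt (∑ i, v i ^ 2) := by
  exact SubexpAux.main M hM hspec
end

section
/- Ergodic integer matrices have an expanding eigenvalue (Kronecker): Let A ∈ GL(2d,Z) (an integer matrix with determinant ±1) such that no complex eigenvalue of A is a root of unity. Then A has a complex eigenvalue β with |β| > 1; equivalently, λ_max := max{ log|β| : β an eigenvalue of A } > 0. -/
open Polynomial IntermediateField

-- helper: multiset product of reals in [0,1] is ≤ 1
lemma multiset_prod_le_one {s : Multiset ℝ} (h : ∀ x ∈ s, 0 ≤ x ∧ x ≤ 1) : s.prod ≤ 1 := by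
  induction s using Multiset.induction with
  | empty => simp
  | cons a s ih =>
    rw [Multiset.prod_cons]
    have ha := h a (Multiset.mem_cons_self a s)
    have hs : s.prod ≤ 1 := ih (fun x hx => h x (Multiset.mem_cons_of_mem hx))
    have hs0 : 0 ≤ s.prod := Multiset.prod_nonneg (fun x hx => (h x (Multiset.mem_cons_of_mem hx)).1)
    calc a * s.prod ≤ 1 * 1 := mul_le_mul ha.2 hs hs0 zero_le_one
    _ = 1 := one_mul 1

/-- **Ergodic integer matrices have an expanding eigenvalue (Kronecker).**
If `A ∈ GL(2d, ℤ)` (with `d ≥ 1`) has no complex eigenvalue that is a root of unity,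
then `A` has a complex eigenvalue `β` with `|β| > 1`. -/
theorem ergodic_integer_matrix_has_expanding_eigenvalue
    {d : ℕ} (hd : 0 < d) (A : Matrix (Fin (2 * d)) (Fin (2 * d)) ℤ)
    (hA : IsUnit A.det)
    (hroots : ∀ z ∈ ((A.map (algebraMap ℤ ℂ)).charpoly).roots,
      ∀ k : ℕ, 1 ≤ k → z ^ k ≠ 1) :
    ∃ β ∈ ((A.map (algebraMap ℤ ℂ)).charpoly).roots, 1 < ‖β‖ := by
  by_contra hcon
  push_neg at hcon
  set B := A.map (algebraMap ℤ ℂ) with hB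
  set p := B.charpoly with hp
  -- determinant has absolute value 1
  have hdet : ‖B.det‖ = 1 := by
    have : B.det = (A.det : ℂ) := by
      rw [hB, ← RingHom.mapMatrix_apply, ← RingHom.map_det]; rfl
    rw [this]
    rcases Int.isUnit_iff.mp hA with h | h <;> simp [h]
  have hprod : p.roots.prod = B.det := (Matrix.det_eq_prod_roots_charpoly B).symm
  -- abs of product of roots is 1
  have habs_prod : (p.roots.map (fun w => ‖w‖)).prod = 1 := by
    have h := map_multiset_prod (normHom : ℂ →*₀ ℝ) p.roots
    rw [hprod] at h
    exact h.symm.trans hdet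
  -- every root has abs exactly 1
  have hone : ∀ z ∈ p.roots, ‖z‖ = 1 := by
    intro z hz
    by_contra hne
    have hlt : ‖z‖ < 1 := lt_of_le_of_ne (hcon z hz) hne
    obtain ⟨t, ht⟩ := Multiset.exists_cons_of_mem (Multiset.mem_map_of_mem (fun w => ‖w‖) hz)
    have htle : t.prod ≤ 1 := by
      apply multiset_prod_le_one
      intro x hx
      have hxmem : x ∈ p.roots.map (fun w => ‖w‖) := ht ▸ Multiset.mem_cons_of_mem hx
      obtain ⟨w, hw, rfl⟩ := Multiset.mem_map.mp hxmem
      exact ⟨norm_nonneg w, hcon w hw⟩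
    have ht0 : 0 ≤ t.prod := by
      apply Multiset.prod_nonneg
      intro x hx
      have hxmem : x ∈ p.roots.map (fun w => ‖w‖) := ht ▸ Multiset.mem_cons_of_mem hx
      obtain ⟨w, hw, rfl⟩ := Multiset.mem_map.mp hxmem
      exact norm_nonneg w
    have : (p.roots.map (fun w => ‖w‖)).prod < 1 := by
      rw [ht, Multiset.prod_cons]
      calc ‖z‖ * t.prod ≤ ‖z‖ * 1 :=
            mul_le_mul_of_nonneg_left htle (norm_nonneg z)
      _ = ‖z‖ := mul_one _
      _ < 1 := hlt
    rw [habs_prod] at this; exact lt_irrefl 1 this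
  -- roots are nonempty
  have hcard : p.roots.card = 2 * d := by
    have hsp : p.Splits := IsAlgClosed.splits p
    rw [(splits_iff_card_roots.mp hsp), Matrix.charpoly_natDegree_eq_dim]
    simp
  have hne : p.roots ≠ 0 := by
    intro h0
    rw [h0] at hcard
    simp at hcard
    omega
  obtain ⟨β, hβ⟩ := Multiset.exists_mem_of_ne_zero hne
  -- β is a root of charpoly of A over ℤ via aeval
  have haev : Polynomial.aeval β A.charpoly = 0 := by
    have : p = A.charpoly.map (algebraMap ℤ ℂ) := by
      rw [hp, hB, Matrix.charpoly_map]
    have hroot : p.IsRoot β := isRoot_of_mem_roots hβ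
    rw [this] at hroot
    rwa [Polynomial.IsRoot, Polynomial.eval_map, ← Polynomial.aeval_def] at hroot
  have hint : IsIntegral ℤ β := ⟨A.charpoly, A.charpoly_monic, by rwa [← Polynomial.aeval_def]⟩
  -- build the number field ℚ⟮β⟯
  have hintQ : IsIntegral ℚ β := hint.tower_top
  haveI : FiniteDimensional ℚ ℚ⟮β⟯ := adjoin.finiteDimensional hintQ
  haveI : NumberField ℚ⟮β⟯ := ⟨⟩
  set x : ℚ⟮β⟯ := AdjoinSimple.gen ℚ β with hx
  have halg : algebraMap ℚ⟮β⟯ ℂ x = β := AdjoinSimple.algebraMap_gen ℚ β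
  have hxint : IsIntegral ℤ x := by
    rwa [← isIntegral_algebraMap_iff (algebraMap ℚ⟮β⟯ ℂ).injective, halg]
  -- x satisfies charpoly
  have haevx : Polynomial.aeval x A.charpoly = 0 := by
    apply (algebraMap ℚ⟮β⟯ ℂ).injective
    rw [map_zero, ← Polynomial.aeval_algebraMap_apply, halg, haev]
  -- every embedding sends x to a root of p, hence norm 1
  have hnorm : ∀ φ : ℚ⟮β⟯ →+* ℂ, ‖φ x‖ = 1 := by
    intro φ
    have : Polynomial.aeval (φ x) A.charpoly = 0 := by
      show Polynomial.aeval (φ.toIntAlgHom x) A.charpoly = 0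
      rw [Polynomial.aeval_algHom_apply, haevx, map_zero]
    have hmem : φ x ∈ p.roots := by
      rw [Polynomial.mem_roots (Matrix.charpoly_monic B).ne_zero, hB, Matrix.charpoly_map,
        Polynomial.IsRoot, Polynomial.eval_map, ← Polynomial.aeval_def]
      exact this
    exact hone _ hmem
  obtain ⟨n, hn, hxn⟩ := NumberField.Embeddings.pow_eq_one_of_norm_eq_one ℚ⟮β⟯ ℂ hxint hnorm
  have : β ^ n = 1 := by
    have := congrArg (algebraMap ℚ⟮β⟯ ℂ) hxn
    rwa [map_pow, map_one, halg] at this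
  exact hroots β hβ n hn this
end
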